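/- arXiv:2405.13371 — 6 statements merged into one kernel-verified Lean document; each statement's English description precedes it below -/
import Mathlib

section
/- Every finite simple graph G with maximum degree Δ admits a proper edge coloring using at most Δ + 1 colors. -/
namespace VizingProof
set_option linter.unusedSectionVars false

variable {V : Type*} [Fintype V] [DecidableEq V]

/-- A partial proper edge coloring of `G` with colors in `Fin k`. -/
structure PC (G : SimpleGraph V) (k : ℕ) where
  c : V → V → Option (Fin k)
  symm : ∀ u v, c u v = c v u
  adj : ∀ u v a, c u v = some a → G.Adj u v
  proper : ∀ u v w a, c u v = some a → c u w = some a → v = w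

variable {G : SimpleGraph V} {k : ℕ}

/-- Color `a` is free (unused) at vertex `v`. -/
def PC.free (C : PC G k) (v : V) (a : Fin k) : Prop := ∀ u, C.c v u ≠ some a

lemma PC.c_self (C : PC G k) (v : V) : C.c v v = none := by
  cases h : C.c v v with
  | none => rfl
  | some a => exact absurd (C.adj v v a h) (G.irrefl)

lemma PC.free_exists [DecidableRel G.Adj] (C : PC G k) (v : V)
    (hdeg : G.degree v < k) : ∃ a, C.free v a := by
  by_contra h
  push_neg at h
  -- every color is used: injection Fin k → neighbors
  choose u hu using fun a : Fin k => not_forall.mp (h a)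
  simp only [not_not] at hu
  have hinj : Function.Injective u := by
    intro a b hab
    exact Option.some_injective _ ((hu a).symm.trans (hab ▸ hu b))
  have hmem : ∀ a, u a ∈ G.neighborFinset v := by
    intro a
    simp [SimpleGraph.mem_neighborFinset]
    exact C.adj v (u a) a (hu a)
  have := Fintype.card_le_of_injective (fun a => (⟨u a, hmem a⟩ : G.neighborFinset v))
    (fun a b hab => hinj (congrArg Subtype.val hab))
  rw [Fintype.card_coe, SimpleGraph.card_neighborFinset_eq_degree, Fintype.card_fin] at this
  omega

/-- Update the color of the (unordered) edge `x y` to `o`. -/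
def PC.update (C : PC G k) (x y : V) (o : Option (Fin k))
    (hxy : x ≠ y)
    (hadj : ∀ a, o = some a → G.Adj x y)
    (hfx : ∀ a, o = some a → ∀ u, u ≠ y → C.c x u ≠ some a)
    (hfy : ∀ a, o = some a → ∀ u, u ≠ x → C.c y u ≠ some a) : PC G k where
  c u v := if (u = x ∧ v = y) ∨ (u = y ∧ v = x) then o else C.c u v
  symm := by
    intro u v
    by_cases h : (u = x ∧ v = y) ∨ (u = y ∧ v = x)
    · rw [if_pos h, if_pos (by tauto)]
    · rw [if_neg h, if_neg (by tauto), C.symm]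
  adj := by
    intro u v a h
    by_cases h' : (u = x ∧ v = y) ∨ (u = y ∧ v = x)
    · rw [if_pos h'] at h
      rcases h' with ⟨rfl, rfl⟩ | ⟨rfl, rfl⟩
      · exact hadj a h
      · exact (hadj a h).symm
    · rw [if_neg h'] at h
      exact C.adj u v a h
  proper := by
    intro u v w a h1 h2
    by_cases hv : (u = x ∧ v = y) ∨ (u = y ∧ v = x) <;>
      by_cases hw : (u = x ∧ w = y) ∨ (u = y ∧ w = x)
    · rw [if_pos hv] at h1; rw [if_pos hw] at h2
      rcases hv with ⟨rfl, rfl⟩ | ⟨rfl, rfl⟩ <;> rcases hw with ⟨h3, rfl⟩ | ⟨h3, rfl⟩ <;>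
        first | rfl | (exact absurd h3 hxy) | (exact absurd h3 hxy.symm)
    · rw [if_pos hv] at h1; rw [if_neg hw] at h2
      rcases hv with ⟨rfl, rfl⟩ | ⟨rfl, rfl⟩
      · exact absurd h2 (hfx a h1 w (by tauto))
      · exact absurd h2 (hfy a h1 w (by tauto))
    · rw [if_neg hv] at h1; rw [if_pos hw] at h2
      rcases hw with ⟨rfl, rfl⟩ | ⟨rfl, rfl⟩
      · exact absurd h1 (hfx a h2 v (by tauto))
      · exact absurd h1 (hfy a h2 v (by tauto))
    · rw [if_neg hv] at h1; rw [if_neg hw] at h2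
      exact C.proper u v w a h1 h2

lemma PC.update_c (C : PC G k) {x y o hxy hadj hfx hfy} (u v : V) :
    (C.update x y o hxy hadj hfx hfy).c u v =
      if (u = x ∧ v = y) ∨ (u = y ∧ v = x) then o else C.c u v := rfl

lemma PC.update_c_of_ne (C : PC G k) {x y o hxy hadj hfx hfy} {u v : V}
    (h : ¬((u = x ∧ v = y) ∨ (u = y ∧ v = x))) :
    (C.update x y o hxy hadj hfx hfy).c u v = C.c u v := if_neg h

section Swap

open Classical

variable (C : PC G k) (α β : Fin k)

/-- The α/β relation on vertices. -/
def PC.rel (u v : V) : Prop := C.c u v = some α ∨ C.c u v = some β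

lemma PC.rel_symm {u v : V} (h : C.rel α β u v) : C.rel α β v u := by
  unfold PC.rel at *; rw [C.symm v u]; exact h

/-- Reachability in the α/β subgraph. -/
def PC.reach (u v : V) : Prop := Relation.ReflTransGen (C.rel α β) u v

lemma PC.reach_symm {u v : V} (h : C.reach α β u v) : C.reach α β v u := by
  induction h with
  | refl => exact Relation.ReflTransGen.refl
  | tail _ hr ih => exact Relation.ReflTransGen.head (C.rel_symm α β hr) ih

lemma PC.reach_iff_of_rel {u₀ u v : V} (h : C.rel α β u v) :
    C.reach α β u₀ u ↔ C.reach α β u₀ v :=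
  ⟨fun h' => h'.tail h, fun h' => h'.tail (C.rel_symm α β h)⟩

/-- Swap colors α and β on the connected component of `u₀` in the α/β subgraph. -/
noncomputable def PC.swap (u₀ : V) : PC G k where
  c u v := if C.reach α β u₀ u ∧ (C.c u v = some α ∨ C.c u v = some β)
           then (if C.c u v = some α then some β else some α) else C.c u v
  symm := by
    intro u v
    rw [C.symm v u]
    have hcond : (C.reach α β u₀ v ∧ (C.c u v = some α ∨ C.c u v = some β)) ↔
        (C.reach α β u₀ u ∧ (C.c u v = some α ∨ C.c u v = some β)) := by
      constructor <;> rintro ⟨h1, h2⟩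
      · exact ⟨(C.reach_iff_of_rel α β h2).mpr h1, h2⟩
      · exact ⟨(C.reach_iff_of_rel α β h2).mp h1, h2⟩
    simp only [hcond]
  adj := by
    intro u v a h
    by_cases h' : C.reach α β u₀ u ∧ (C.c u v = some α ∨ C.c u v = some β)
    · rcases h'.2 with h2 | h2 <;> exact C.adj u v _ h2
    · rw [if_neg h'] at h; exact C.adj u v a h
  proper := by
    intro u v w a h1 h2
    by_cases hv : C.reach α β u₀ u ∧ (C.c u v = some α ∨ C.c u v = some β) <;>
      by_cases hw : C.reach α β u₀ u ∧ (C.c u w = some α ∨ C.c u w = some β)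
    · rw [if_pos hv] at h1; rw [if_pos hw] at h2
      by_cases hab : α = β
      · subst hab
        rcases hv.2 with e1 | e1 <;> rcases hw.2 with e2 | e2 <;>
          exact C.proper u v w α e1 e2
      · rcases hv.2 with e1 | e1 <;> rcases hw.2 with e2 | e2
        · exact C.proper u v w α e1 e2
        · exfalso
          rw [if_pos e1] at h1
          rw [if_neg (by rw [e2]; exact fun hc => hab (Option.some_inj.mp hc).symm)] at h2
          rw [← h2] at h1
          exact hab (Option.some_inj.mp h1).symm
        · exfalso
          rw [if_pos e2] at h2
          rw [if_neg (by rw [e1]; exact fun hc => hab (Option.some_inj.mp hc).symm)] at h1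
          rw [← h1] at h2
          exact hab (Option.some_inj.mp h2).symm
        · exact C.proper u v w β e1 e2
    · rw [if_pos hv] at h1; rw [if_neg hw] at h2
      exfalso
      refine hw ⟨hv.1, ?_⟩
      by_cases e1 : C.c u v = some α
      · rw [if_pos e1] at h1; right; rw [h2, ← h1]
      · rw [if_neg e1] at h1; left; rw [h2, ← h1]
    · rw [if_neg hv] at h1; rw [if_pos hw] at h2
      exfalso
      refine hv ⟨hw.1, ?_⟩
      by_cases e1 : C.c u w = some α
      · rw [if_pos e1] at h2; right; rw [h1, ← h2]
      · rw [if_neg e1] at h2; left; rw [h1, ← h2]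
    · rw [if_neg hv] at h1; rw [if_neg hw] at h2
      exact C.proper u v w a h1 h2

lemma PC.swap_c (u₀ u v : V) :
    (C.swap α β u₀).c u v = if C.reach α β u₀ u ∧ (C.c u v = some α ∨ C.c u v = some β)
      then (if C.c u v = some α then some β else some α) else C.c u v := rfl

lemma PC.swap_isSome (u₀ u v : V) :
    ((C.swap α β u₀).c u v).isSome = (C.c u v).isSome := by
  rw [PC.swap_c]
  split
  · next h => rcases h.2 with h2 | h2 <;> rw [h2] <;> split <;> rfl
  · rfl

lemma PC.swap_c_of_not_reach {u₀ u : V} (h : ¬ C.reach α β u₀ u) (v : V) :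
    (C.swap α β u₀).c u v = C.c u v := by
  rw [PC.swap_c, if_neg (fun hc => h hc.1)]

/-- If `v` is in the swapped component and β was free at `v`, then α is free after. -/
lemma PC.swap_free (u₀ : V) (hab : α ≠ β) {v : V} (hv : C.reach α β u₀ v)
    (hf : C.free v β) : (C.swap α β u₀).free v α := by
  intro u h
  rw [PC.swap_c] at h
  split at h
  · next hc =>
    rcases hc.2 with e | e
    · rw [if_pos e] at h
      exact hab (Option.some_inj.mp h).symm
    · exact hf u e
  · next hc =>
    exact hc ⟨hv, Or.inl h⟩

lemma PC.swap_free_of_not_reach {u₀ v : V} (h : ¬ C.reach α β u₀ v) {γ : Fin k}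
    (hf : C.free v γ) : (C.swap α β u₀).free v γ := by
  intro u hc
  rw [C.swap_c_of_not_reach α β h] at hc
  exact hf u hc

end Swap

section Comb

variable {W : Type*}

/-- Unique-neighbor deletion: if `w` is the only `r`-neighbor of `x`, then anything
reachable from `x` (other than `x`) is reachable from `w` avoiding `x`. -/
lemma reach_avoid {r : W → W → Prop} {x w : W}
    (hw : ∀ u, r x u → u = w) {v : W}
    (h : Relation.ReflTransGen r x v) :
    v = x ∨ Relation.ReflTransGen (fun a b => r a b ∧ a ≠ x ∧ b ≠ x) w v := by
  induction h with
  | refl => exact Or.inl rfl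
  | tail hxy hr ih =>
    rename_i u v'
    by_cases hvx : v' = x
    · exact Or.inl hvx
    · right
      rcases ih with rfl | ih
      · rw [hw v' hr]
      · have haux : ∀ z, Relation.ReflTransGen (fun a b => r a b ∧ a ≠ x ∧ b ≠ x) w z →
            z = w ∨ z ≠ x := by
          intro z hz
          induction hz with
          | refl => exact Or.inl rfl
          | tail _ hs _ => exact Or.inr hs.2.2
        have hux : u ≠ x := by
          intro hux'
          rcases haux u ih with rfl | hne
          · exact hvx ((hw v' (hux' ▸ hr)).trans hux')
          · exact hne hux'
        exact ih.tail ⟨hr, hux, hvx⟩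

/-- A chain of two partial matchings: at most two β-unsaturated vertices per component. -/
lemma three_free (mα mβ : W → Option W)
    (hα : ∀ u v, mα u = some v → mα v = some u)
    (hβ : ∀ u v, mβ u = some v → mβ v = some u)
    {a b c : W} (hab : a ≠ b) (hac : a ≠ c) (hbc : b ≠ c)
    (ha : mβ a = none) (hb : mβ b = none) (hc : mβ c = none)
    (Rab : Relation.ReflTransGen (fun u v => mα u = some v ∨ mβ u = some v) a b)
    (Rac : Relation.ReflTransGen (fun u v => mα u = some v ∨ mβ u = some v) a c) : False := by
  classical
  -- the alternating sequence from a
  let p : ℕ → Option W := fun n => Nat.rec (some a)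
    (fun n pn => pn.bind (if n % 2 = 0 then mα else mβ)) n
  have hp0 : p 0 = some a := rfl
  have hpsucc : ∀ n, p (n + 1) = (p n).bind (if n % 2 = 0 then mα else mβ) := fun n => rfl
  have hmono : ∀ n, p n = none → p (n + 1) = none := by
    intro n h; rw [hpsucc, h]; rfl
  have hmono' : ∀ m n, m ≤ n → p m = none → p n = none := by
    intro m n hmn h
    induction n with
    | zero => rwa [Nat.le_zero.mp hmn] at h
    | succ n ih =>
      rcases Nat.lt_or_ge m (n+1) with h' | h'
      · exact hmono n (ih (by omega))
      · have : m = n + 1 := by omega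
        rw [← this]; exact h
  -- closure: everything reachable from a appears in p
  have hclos : ∀ v, Relation.ReflTransGen (fun u v => mα u = some v ∨ mβ u = some v) a v →
      ∃ n, p n = some v := by
    intro v h
    induction h with
    | refl => exact ⟨0, hp0⟩
    | tail hxy hr ih =>
      rename_i u v'
      obtain ⟨n, hn⟩ := ih
      rcases Nat.mod_two_eq_zero_or_one n with he | ho
      · -- n even: α-neighbor is p (n+1); β-neighbor is p (n-1) (or none if n = 0)
        rcases hr with hm | hm
        · refine ⟨n + 1, ?_⟩
          rw [hpsucc, hn, if_pos he]
          exact hm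
        · -- β step
          rcases Nat.eq_zero_or_pos n with rfl | hpos
          · rw [hp0, Option.some_inj] at hn
            subst hn
            rw [ha] at hm
            simp at hm
          · obtain ⟨n', rfl⟩ := Nat.exists_eq_succ_of_ne_zero (by omega : n ≠ 0)
            rw [hpsucc, if_neg (by omega)] at hn
            -- p (n'+1) = (p n').bind mβ = some u
            cases hpn' : p n' with
            | none => rw [hpn'] at hn; simp at hn
            | some w' =>
              rw [hpn'] at hn
              simp only [Option.bind_some] at hn
              -- mβ w' = some u, so mβ u = some w' ; uniqueness: mβ u = some v' gives v' = w'
              have h1 : mβ u = some w' := hβ w' u hn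
              rw [hm] at h1
              exact ⟨n', by rw [hpn', Option.some_inj.mp h1]⟩
      · -- n odd
        rcases hr with hm | hm
        · obtain ⟨n', rfl⟩ := Nat.exists_eq_succ_of_ne_zero (by omega : n ≠ 0)
          have heven : n' % 2 = 0 := by omega
          rw [hpsucc, if_pos heven] at hn
          cases hpn' : p n' with
          | none => rw [hpn'] at hn; simp at hn
          | some w' =>
            rw [hpn'] at hn
            simp only [Option.bind_some] at hn
            have h1 : mα u = some w' := hα w' u hn
            rw [hm] at h1
            exact ⟨n', by rw [hpn', Option.some_inj.mp h1]⟩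
        · refine ⟨n + 1, ?_⟩
          rw [hpsucc, hn, if_neg (by omega)]
          exact hm
  -- b and c occur only at odd indices, after which p dies
  have key : ∀ v, v ≠ a → mβ v = none → ∀ n, p n = some v → n % 2 = 1 ∧ p (n + 1) = none := by
    intro v hva hv n hn
    rcases Nat.mod_two_eq_zero_or_one n with he | ho
    · exfalso
      rcases Nat.eq_zero_or_pos n with rfl | hpos
      · rw [hp0, Option.some_inj] at hn; exact hva hn.symm
      · obtain ⟨n', rfl⟩ := Nat.exists_eq_succ_of_ne_zero (by omega : n ≠ 0)
        rw [hpsucc, if_neg (by omega)] at hn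
        cases hpn' : p n' with
        | none => rw [hpn'] at hn; simp at hn
        | some w' =>
          rw [hpn'] at hn
          simp only [Option.bind_some] at hn
          have := hβ w' v hn
          rw [hv] at this
          simp at this
    · constructor
      · omega
      · rw [hpsucc, hn, if_neg (by omega)]
        exact hv
  obtain ⟨nb, hnb⟩ := hclos b Rab
  obtain ⟨nc, hnc⟩ := hclos c Rac
  obtain ⟨_, hb2⟩ := key b (Ne.symm hab) hb nb hnb
  obtain ⟨_, hc2⟩ := key c (Ne.symm hac) hc nc hnc
  have hne : nb ≠ nc := fun h => hbc (Option.some_inj.mp ((h ▸ hnb).symm.trans hnc))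
  rcases Nat.lt_or_ge nb nc with h | h
  · exact absurd hnc (by rw [hmono' (nb+1) nc (by omega) hb2]; simp)
  · exact absurd hnb (by rw [hmono' (nc+1) nb (by omega) hc2]; simp)

end Comb

section Fan

lemma PC.update_isSome (C : PC G k) {x y : V} {a : Fin k} {hxy hadj hfx hfy} (u v : V)
    (h : (C.c u v).isSome) :
    ((C.update x y (some a) hxy hadj hfx hfy).c u v).isSome := by
  rw [PC.update_c]
  split
  · rfl
  · exact h

lemma PC.update_self (C : PC G k) {x y : V} {o : Option (Fin k)} {hxy hadj hfx hfy} :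
    ((C.update x y o hxy hadj hfx hfy).c x y) = o := by
  rw [PC.update_c, if_pos (Or.inl ⟨rfl, rfl⟩)]

/-- A Vizing fan at `x`: `x (f 0)` is uncolored, and the color of each `x (f (l+1))`
is free at `f l`. -/
structure IsFan (C : PC G k) (x : V) (f : ℕ → V) (m : ℕ) : Prop where
  adj : ∀ l, l ≤ m → G.Adj x (f l)
  start : C.c x (f 0) = none
  colored : ∀ l, l < m → ∃ b, C.c x (f (l+1)) = some b ∧ C.free (f l) b
  inj : ∀ i, i ≤ m → ∀ j, j ≤ m → f i = f j → i = j

/-- Rotating a fan: shift the colors down, leaving `x (f i)` uncolored. -/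
lemma rotate {C : PC G k} {x : V} {f : ℕ → V} {m : ℕ} (hf : IsFan C x f m) :
    ∀ i, i ≤ m → ∃ Ci : PC G k,
    (∀ u v, u ≠ x → v ≠ x → Ci.c u v = C.c u v) ∧
    (Ci.c x (f i) = none) ∧
    (∀ l, l < i → Ci.c x (f l) = C.c x (f (l+1))) ∧
    (∀ w, (∀ l, l ≤ i → w ≠ f l) → Ci.c x w = C.c x w) ∧
    (∀ u v, (C.c u v).isSome →
      (Ci.c u v).isSome ∨ (u = x ∧ v = f i) ∨ (v = x ∧ u = f i)) ∧
    (∀ γ, C.free x γ → Ci.free x γ) := by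
  intro i hi
  induction i with
  | zero =>
    exact ⟨C, fun _ _ _ _ => rfl, hf.start, fun l hl => absurd hl (Nat.not_lt_zero l),
      fun _ _ => rfl, fun u v h => Or.inl h, fun _ h => h⟩
  | succ i ih =>
    obtain ⟨Ci, s1, s2, s3, s4, s5, s6⟩ := ih (by omega)
    obtain ⟨b, hb, hbfree⟩ := hf.colored i (by omega)
    -- basic disequalities
    have hxf : ∀ l, l ≤ m → x ≠ f l := fun l hl => (hf.adj l hl).ne
    have hxi : x ≠ f i := hxf i (by omega)
    have hxi1 : x ≠ f (i+1) := hxf (i+1) (by omega)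
    have hfii : f i ≠ f (i+1) := fun h => by
      have := hf.inj i (by omega) (i+1) (by omega) h; omega
    have hCi1 : Ci.c x (f (i+1)) = some b := by
      rw [s4 (f (i+1)) (fun l hl h => by
        have := hf.inj (i+1) (by omega) l (by omega) h; omega)]
      exact hb
    -- erase x (f (i+1))
    set E := Ci.update x (f (i+1)) none hxi1 (fun a h => nomatch h)
      (fun a h => nomatch h) (fun a h => nomatch h) with hE
    have hEc : ∀ u v, ¬((u = x ∧ v = f (i+1)) ∨ (u = f (i+1) ∧ v = x)) →
        E.c u v = Ci.c u v := fun u v h => Ci.update_c_of_ne h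
    have hEnone : E.c x (f (i+1)) = none := Ci.update_self
    -- insert x (f i) := b
    have hfxD : ∀ a, (some b : Option (Fin k)) = some a → ∀ u, u ≠ f i →
        E.c x u ≠ some a := by
      intro a ha u hu hc
      obtain rfl : b = a := Option.some_inj.mp ha
      by_cases huu : u = f (i+1)
      · rw [huu, hEnone] at hc; exact nomatch hc
      · rw [hEc x u (by tauto)] at hc
        exact huu (Ci.proper x u (f (i+1)) b hc hCi1)
    have hfyD : ∀ a, (some b : Option (Fin k)) = some a → ∀ u, u ≠ x →
        E.c (f i) u ≠ some a := by
      intro a ha u hu hc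
      obtain rfl : b = a := Option.some_inj.mp ha
      rw [hEc (f i) u (by tauto)] at hc
      rw [s1 (f i) u (Ne.symm hxi) hu] at hc
      exact hbfree u hc
    set D := E.update x (f i) (some b) hxi (fun a _ => hf.adj i (by omega)) hfxD hfyD with hD
    have hDc : ∀ u v, ¬((u = x ∧ v = f i) ∨ (u = f i ∧ v = x)) →
        D.c u v = E.c u v := fun u v h => E.update_c_of_ne h
    have hDb : D.c x (f i) = some b := E.update_self
    refine ⟨D, ?_, ?_, ?_, ?_, ?_, ?_⟩
    · -- spec1
      intro u v hu hv
      rw [hDc u v (by tauto), hEc u v (by tauto), s1 u v hu hv]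
    · -- spec2
      rw [hDc x (f (i+1)) (by tauto), hEnone]
    · -- spec3
      intro l hl
      rcases Nat.lt_or_ge l i with h' | h'
      · have h1 : f l ≠ f i := fun h => by
          have := hf.inj l (by omega) i (by omega) h; omega
        have h2 : f l ≠ f (i+1) := fun h => by
          have := hf.inj l (by omega) (i+1) (by omega) h; omega
        rw [hDc x (f l) (by tauto), hEc x (f l) (by tauto), s3 l h']
      · have : l = i := by omega
        subst this
        rw [hDb, hb]
    · -- spec4
      intro w hw
      have h1 : w ≠ f i := hw i (by omega)
      have h2 : w ≠ f (i+1) := hw (i+1) (by omega)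
      rw [hDc x w (by tauto), hEc x w (by tauto), s4 w (fun l hl => hw l (by omega))]
    · -- spec5
      intro u v hsome
      rcases s5 u v hsome with h | h | h
      · by_cases hp : (u = x ∧ v = f (i+1)) ∨ (u = f (i+1) ∧ v = x)
        · right
          tauto
        · left
          by_cases hq : (u = x ∧ v = f i) ∨ (u = f i ∧ v = x)
          · have : D.c u v = some b := by
              rw [PC.update_c, if_pos hq]
            rw [this]; rfl
          · rw [hDc u v hq, hEc u v hp]; exact h
      · left
        obtain ⟨rfl, rfl⟩ := h
        rw [hDb]; rfl
      · left
        rw [h.1, h.2, show D.c (f i) x = D.c x (f i) from D.symm _ _, hDb]; rfl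
    · -- spec6
      intro γ hγ
      have hγi := s6 γ hγ
      intro u hc
      by_cases huu : u = f i
      · subst huu
        rw [hDb] at hc
        exact hγi (f (i+1)) (by rw [hCi1, hc])
      · rw [hDc x u (by tauto)] at hc
        by_cases hu1 : u = f (i+1)
        · subst hu1
          rw [hEnone] at hc
          exact nomatch hc
        · rw [hEc x u (by tauto)] at hc
          exact hγi u hc

end Fan

section Main

lemma rtg_symm {W : Type*} {r : W → W → Prop} (hs : ∀ u v, r u v → r v u) {u v : W}
    (h : Relation.ReflTransGen r u v) : Relation.ReflTransGen r v u := by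
  induction h with
  | refl => exact .refl
  | tail _ hr ih => exact Relation.ReflTransGen.head (hs _ _ hr) ih

open Classical in
/-- The partial matching given by color `γ` on edges avoiding `x`. -/
noncomputable def matchFn (C : PC G k) (x : V) (γ : Fin k) (v : V) : Option V :=
  if h : ∃ u, v ≠ x ∧ u ≠ x ∧ C.c v u = some γ then some h.choose else none

lemma matchFn_spec {C : PC G k} {x : V} {γ : Fin k} {v u : V}
    (h : matchFn C x γ v = some u) : v ≠ x ∧ u ≠ x ∧ C.c v u = some γ := by
  unfold matchFn at h
  split at h
  · next hex =>
    obtain rfl : hex.choose = u := Option.some_inj.mp h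
    exact hex.choose_spec
  · exact nomatch h

lemma matchFn_eq {C : PC G k} {x : V} {γ : Fin k} {v u : V} (hv : v ≠ x) (hu : u ≠ x)
    (hc : C.c v u = some γ) : matchFn C x γ v = some u := by
  have hex : ∃ u', v ≠ x ∧ u' ≠ x ∧ C.c v u' = some γ := ⟨u, hv, hu, hc⟩
  unfold matchFn
  rw [dif_pos hex]
  exact congrArg some (C.proper v hex.choose u γ hex.choose_spec.2.2 hc)

lemma matchFn_none {C : PC G k} {x : V} {γ : Fin k} {v : V}
    (h : ∀ u, u ≠ x → C.c v u ≠ some γ) : matchFn C x γ v = none := by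
  unfold matchFn
  rw [dif_neg]
  rintro ⟨u, hv, hu, hc⟩
  exact h u hu hc

lemma matchFn_symm {C : PC G k} {x : V} {γ : Fin k} {u v : V}
    (h : matchFn C x γ u = some v) : matchFn C x γ v = some u := by
  obtain ⟨hu, hv, hc⟩ := matchFn_spec h
  exact matchFn_eq hv hu (by rw [C.symm v u]; exact hc)

variable [DecidableRel G.Adj]

lemma fan_extend (hdeg : ∀ v, G.degree v < k) (x : V) (α : Fin k) (C : PC G k)
    (hα : C.free x α) :
    ∀ (n m : ℕ) (f : ℕ → V), Fintype.card V ≤ m + n → IsFan C x f m →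
    ∃ C' : PC G k, (∀ u v, (C.c u v).isSome → (C'.c u v).isSome) ∧
      (C'.c x (f 0)).isSome := by
  intro n
  induction n with
  | zero =>
    intro m f hcard hf
    exfalso
    have : m + 1 ≤ Fintype.card V := by
      have hinj : Function.Injective (fun i : Fin (m+1) => f i.1) := by
        intro i j h
        exact Fin.ext (hf.inj i.1 (by omega) j.1 (by omega) h)
      simpa using Fintype.card_le_of_injective _ hinj
    omega
  | succ n ih =>
    intro m f hcard hf
    obtain ⟨β, hβ⟩ := C.free_exists (f m) (hdeg (f m))
    have hxm : x ≠ f m := (hf.adj m le_rfl).ne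
    by_cases hfx : C.free x β
    · -- β is free at both x and f m : rotate the whole fan and color x (f m) with β
      obtain ⟨Cm, s1, s2, s3, s4, s5, s6⟩ := rotate hf m le_rfl
      have hfree_x : Cm.free x β := s6 β hfx
      have hfree_fm : Cm.free (f m) β := by
        intro u hc
        by_cases hu : u = x
        · rw [hu] at hc; rw [Cm.symm (f m) x, s2] at hc; exact nomatch hc
        · rw [s1 (f m) u (Ne.symm hxm) hu] at hc; exact hβ u hc
      set C' := Cm.update x (f m) (some β) hxm (fun _ _ => hf.adj m le_rfl)
        (fun a ha u _ hc => by obtain rfl := Option.some_inj.mp ha; exact hfree_x u hc)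
        (fun a ha u _ hc => by obtain rfl := Option.some_inj.mp ha; exact hfree_fm u hc)
        with hC'
      refine ⟨C', ?_, ?_⟩
      · intro u v h
        rcases s5 u v h with h' | h' | h'
        · exact Cm.update_isSome u v h'
        · rw [h'.1, h'.2, show C'.c x (f m) = some β from Cm.update_self]; rfl
        · rw [h'.1, h'.2, show C'.c (f m) x = C'.c x (f m) from C'.symm _ _,
            show C'.c x (f m) = some β from Cm.update_self]; rfl
      · rcases Nat.eq_zero_or_pos m with rfl | hm
        · rw [show C'.c x (f 0) = some β from Cm.update_self]; rfl
        · obtain ⟨b0, hb0, _⟩ := hf.colored 0 hm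
          have h0 : (Cm.c x (f 0)).isSome := by rw [s3 0 hm, hb0]; rfl
          exact Cm.update_isSome x (f 0) h0
    · -- β is used at x
      have hαβ : α ≠ β := fun h => hfx (h ▸ hα)
      obtain ⟨w, hw⟩ : ∃ w, C.c x w = some β := by
        unfold PC.free at hfx; push_neg at hfx; exact hfx
      by_cases hwf : ∃ i, i ≤ m ∧ w = f i
      · -- Kempe chain case
        obtain ⟨i₀, hi₀, rfl⟩ := hwf
        have hne0 : i₀ ≠ 0 := by
          intro h; rw [h, hf.start] at hw; exact nomatch hw
        have hnem : i₀ ≠ m := by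
          intro h
          rw [h] at hw
          exact hβ x (by rw [C.symm (f m) x]; exact hw)
        obtain ⟨j, rfl⟩ : ∃ j, i₀ = j + 1 := ⟨i₀ - 1, by omega⟩
        have hjm : j + 1 < m := by omega
        obtain ⟨b, hb, hbfree⟩ := hf.colored j (by omega)
        obtain rfl : β = b := (Option.some_inj.mp (hb.symm.trans hw)).symm
        obtain ⟨Cm, m1, m2, m3, m4, m5, m6⟩ := rotate hf m le_rfl
        obtain ⟨Cj, j1, j2, j3, j4, j5, j6⟩ := rotate hf j (by omega)
        have hxj : x ≠ f j := (hf.adj j (by omega)).ne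
        have hxj1 : x ≠ f (j+1) := (hf.adj (j+1) (by omega)).ne
        have hCmβ : Cm.c x (f j) = some β := (m3 j (by omega)).trans hw
        have hCjβ : Cj.c x (f (j+1)) = some β := by
          rw [j4 (f (j+1)) (fun l hl h => by
            have := hf.inj (j+1) (by omega) l (by omega) h; omega)]
          exact hw
        have hCmα : Cm.free x α := m6 α hα
        have hCjα : Cj.free x α := j6 α hα
        have hfm_m : Cm.free (f m) β := by
          intro u hc
          by_cases hu : u = x
          · rw [hu] at hc; rw [Cm.symm (f m) x, m2] at hc; exact nomatch hc
          · rw [m1 (f m) u (Ne.symm hxm) hu] at hc; exact hβ u hc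
        have hfj_j : Cj.free (f j) β := by
          intro u hc
          by_cases hu : u = x
          · rw [hu] at hc; rw [Cj.symm (f j) x, j2] at hc; exact nomatch hc
          · rw [j1 (f j) u (Ne.symm hxj) hu] at hc; exact hbfree u hc
        have hUm : ∀ u, Cm.rel α β x u → u = f j := by
          rintro u (h | h)
          · exact absurd h (hCmα u)
          · exact Cm.proper x u (f j) β h hCmβ
        have hUj : ∀ u, Cj.rel α β x u → u = f (j+1) := by
          rintro u (h | h)
          · exact absurd h (hCjα u)
          · exact Cj.proper x u (f (j+1)) β h hCjβ
        by_cases hKm : Cm.reach α β (f m) x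
        · -- the chain from f m reaches x in Cm; then the chain from f j cannot reach x in Cj
          have hKj : ¬ Cj.reach α β (f j) x := by
            intro hKj
            -- translate both to matchings on C avoiding x, then use three_free
            have bridge : ∀ (D : PC G k), (∀ u v, u ≠ x → v ≠ x → D.c u v = C.c u v) →
                ∀ a b, (D.rel α β a b ∧ a ≠ x ∧ b ≠ x) →
                  (matchFn C x α a = some b ∨ matchFn C x β a = some b) := by
              rintro D hD a b ⟨(h | h), hax, hbx⟩
              · left; exact matchFn_eq hax hbx (by rw [← hD a b hax hbx]; exact h)
              · right; exact matchFn_eq hax hbx (by rw [← hD a b hax hbx]; exact h)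
            have bm : Relation.ReflTransGen
                (fun a b => matchFn C x α a = some b ∨ matchFn C x β a = some b)
                (f j) (f m) := by
              rcases reach_avoid hUm (Cm.reach_symm α β hKm) with h | h
              · exact absurd h (Ne.symm hxm)
              · exact Relation.ReflTransGen.mono (fun a b hab => bridge Cm m1 a b hab) _ _ h
            have bj : Relation.ReflTransGen
                (fun a b => matchFn C x α a = some b ∨ matchFn C x β a = some b)
                (f (j+1)) (f j) := by
              rcases reach_avoid hUj (Cj.reach_symm α β hKj) with h | h
              · exact absurd h (Ne.symm hxj)
              · exact Relation.ReflTransGen.mono (fun a b hab => bridge Cj j1 a b hab) _ _ h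
            have hsym : ∀ u v, (matchFn C x α u = some v ∨ matchFn C x β u = some v) →
                (matchFn C x α v = some u ∨ matchFn C x β v = some u) := by
              rintro u v (h | h)
              · exact Or.inl (matchFn_symm h)
              · exact Or.inr (matchFn_symm h)
            refine three_free (matchFn C x α) (matchFn C x β)
              (fun u v => matchFn_symm) (fun u v => matchFn_symm)
              (?_ : f j ≠ f m) (?_ : f j ≠ f (j+1)) (?_ : f m ≠ f (j+1))
              ?_ ?_ ?_ bm (rtg_symm hsym bj)
            · exact fun h => by have := hf.inj j (by omega) m le_rfl h; omega
            · exact fun h => by have := hf.inj j (by omega) (j+1) (by omega) h; omega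
            · exact fun h => by have := hf.inj m le_rfl (j+1) (by omega) h; omega
            · exact matchFn_none (fun u _ hc => hbfree u hc)
            · exact matchFn_none (fun u _ hc => hβ u hc)
            · refine matchFn_none (fun u hu hc => ?_)
              exact hu (C.proper (f (j+1)) u x β hc (by rw [C.symm (f (j+1)) x]; exact hw))
          -- swap the α/β component of f j in Cj, then color x (f j) with α
          set S := Cj.swap α β (f j) with hS
          have hSfj : S.free (f j) α :=
            Cj.swap_free α β (f j) hαβ Relation.ReflTransGen.refl hfj_j
          have hSx : S.free x α := Cj.swap_free_of_not_reach α β hKj hCjα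
          set C' := S.update x (f j) (some α) hxj (fun _ _ => hf.adj j (by omega))
            (fun a ha u _ hc => by obtain rfl := Option.some_inj.mp ha; exact hSx u hc)
            (fun a ha u _ hc => by obtain rfl := Option.some_inj.mp ha; exact hSfj u hc)
            with hC'
          refine ⟨C', ?_, ?_⟩
          · intro u v h
            rcases j5 u v h with h' | h' | h'
            · refine S.update_isSome u v ?_
              rw [hS, Cj.swap_isSome]
              exact h'
            · rw [h'.1, h'.2, show C'.c x (f j) = some α from S.update_self]; rfl
            · rw [h'.1, h'.2, show C'.c (f j) x = C'.c x (f j) from C'.symm _ _,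
                show C'.c x (f j) = some α from S.update_self]; rfl
          · rcases Nat.eq_zero_or_pos j with rfl | hj
            · rw [show C'.c x (f 0) = some α from S.update_self]; rfl
            · obtain ⟨b0, hb0, _⟩ := hf.colored 0 (by omega)
              have h0 : (Cj.c x (f 0)).isSome := by rw [j3 0 hj, hb0]; rfl
              have h1 : (S.c x (f 0)).isSome := by rw [hS, Cj.swap_isSome]; exact h0
              exact S.update_isSome x (f 0) h1
        · -- the chain from f m does not reach x in Cm: swap it and color x (f m) with α
          set S := Cm.swap α β (f m) with hS
          have hSfm : S.free (f m) α :=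
            Cm.swap_free α β (f m) hαβ Relation.ReflTransGen.refl hfm_m
          have hSx : S.free x α := Cm.swap_free_of_not_reach α β hKm hCmα
          set C' := S.update x (f m) (some α) hxm (fun _ _ => hf.adj m le_rfl)
            (fun a ha u _ hc => by obtain rfl := Option.some_inj.mp ha; exact hSx u hc)
            (fun a ha u _ hc => by obtain rfl := Option.some_inj.mp ha; exact hSfm u hc)
            with hC'
          refine ⟨C', ?_, ?_⟩
          · intro u v h
            rcases m5 u v h with h' | h' | h'
            · refine S.update_isSome u v ?_
              rw [hS, Cm.swap_isSome]
              exact h'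
            · rw [h'.1, h'.2, show C'.c x (f m) = some α from S.update_self]; rfl
            · rw [h'.1, h'.2, show C'.c (f m) x = C'.c x (f m) from C'.symm _ _,
                show C'.c x (f m) = some α from S.update_self]; rfl
          · have hm : 0 < m := by omega
            obtain ⟨b0, hb0, _⟩ := hf.colored 0 hm
            have h0 : (Cm.c x (f 0)).isSome := by rw [m3 0 hm, hb0]; rfl
            have h1 : (S.c x (f 0)).isSome := by rw [hS, Cm.swap_isSome]; exact h0
            exact S.update_isSome x (f 0) h1
      · -- extend the fan by w
        push_neg at hwf
        set f' : ℕ → V := fun l => if l = m + 1 then w else f l with hf'def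
        have hf0 : f' 0 = f 0 := if_neg (by omega)
        have hwx : G.Adj x w := C.adj x w β hw
        have hf' : IsFan C x f' (m+1) := by
          refine ⟨?_, ?_, ?_, ?_⟩
          · intro l hl
            by_cases h : l = m + 1
            · rw [hf'def]; simp only [h, if_pos rfl]; exact hwx
            · rw [hf'def]; simp only [if_neg h]; exact hf.adj l (by omega)
          · rw [hf0]; exact hf.start
          · intro l hl
            by_cases h : l = m
            · subst h
              refine ⟨β, ?_, ?_⟩
              · rw [hf'def]; simp only [if_pos rfl]; exact hw
              · rw [hf'def]; simp only [if_neg (by omega : ¬ l = l + 1)]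
                exact hβ
            · have hlm : l < m := by omega
              obtain ⟨b, hb, hbf⟩ := hf.colored l hlm
              refine ⟨b, ?_, ?_⟩
              · rw [hf'def]; simp only [if_neg (by omega : ¬ l + 1 = m + 1)]; exact hb
              · rw [hf'def]; simp only [if_neg (by omega : ¬ l = m + 1)]; exact hbf
          · intro i hi j hj h
            rw [hf'def] at h
            by_cases h1 : i = m + 1 <;> by_cases h2 : j = m + 1
            · omega
            · simp only [if_pos h1, if_neg h2] at h
              exact absurd h (hwf j (by omega))
            · simp only [if_neg h1, if_pos h2] at h
              exact absurd h.symm (hwf i (by omega))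
            · simp only [if_neg h1, if_neg h2] at h
              exact hf.inj i (by omega) j (by omega) h
        obtain ⟨C', h1, h2⟩ := ih (m+1) f' (by omega) hf'
        rw [hf0] at h2
        exact ⟨C', h1, h2⟩

lemma extend_one (hdeg : ∀ v, G.degree v < k) (C : PC G k) (x y : V)
    (hadj : G.Adj x y) (hnone : C.c x y = none) :
    ∃ C' : PC G k, (∀ u v, (C.c u v).isSome → (C'.c u v).isSome) ∧ (C'.c x y).isSome := by
  obtain ⟨α, hα⟩ := C.free_exists x (hdeg x)
  have hf : IsFan C x (fun _ => y) 0 :=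
    ⟨fun _ _ => hadj, hnone, fun l hl => absurd hl (Nat.not_lt_zero l),
      fun i hi j hj _ => by omega⟩
  exact fan_extend hdeg x α C hα (Fintype.card V) 0 (fun _ => y) (by omega) hf

end Main

section Top

variable [DecidableRel G.Adj]

lemma total_coloring (hdeg : ∀ v, G.degree v < k) :
    ∃ C : PC G k, ∀ u v, G.Adj u v → (C.c u v).isSome := by
  classical
  have main : ∀ (n : ℕ) (C : PC G k),
      (Finset.univ.filter (fun p : V × V => G.Adj p.1 p.2 ∧ C.c p.1 p.2 = none)).card ≤ n →
      ∃ C' : PC G k, ∀ u v, G.Adj u v → (C'.c u v).isSome := by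
    intro n
    induction n with
    | zero =>
      intro C hC
      refine ⟨C, fun u v huv => ?_⟩
      by_contra h
      have hmem : (u, v) ∈ Finset.univ.filter
          (fun p : V × V => G.Adj p.1 p.2 ∧ C.c p.1 p.2 = none) := by
        simp only [Finset.mem_filter, Finset.mem_univ, true_and]
        exact ⟨huv, Option.not_isSome_iff_eq_none.mp h⟩
      have := Finset.card_pos.mpr ⟨(u, v), hmem⟩
      omega
    | succ n ih =>
      intro C hC
      by_cases hem : ∃ u v, G.Adj u v ∧ C.c u v = none
      · obtain ⟨x, y, hadj, hnone⟩ := hem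
        obtain ⟨C', hmono, hsome⟩ := extend_one hdeg C x y hadj hnone
        apply ih C'
        have hsub : (Finset.univ.filter
            (fun p : V × V => G.Adj p.1 p.2 ∧ C'.c p.1 p.2 = none)) ⊆
            (Finset.univ.filter
            (fun p : V × V => G.Adj p.1 p.2 ∧ C.c p.1 p.2 = none)) := by
          intro p hp
          simp only [Finset.mem_filter, Finset.mem_univ, true_and] at hp ⊢
          refine ⟨hp.1, ?_⟩
          by_contra h
          have := hmono p.1 p.2 (Option.ne_none_iff_isSome.mp h)
          rw [hp.2] at this
          simp at this
        have hin : (x, y) ∈ Finset.univ.filter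
            (fun p : V × V => G.Adj p.1 p.2 ∧ C.c p.1 p.2 = none) := by
          simp only [Finset.mem_filter, Finset.mem_univ, true_and]
          exact ⟨hadj, hnone⟩
        have hnotin : (x, y) ∉ Finset.univ.filter
            (fun p : V × V => G.Adj p.1 p.2 ∧ C'.c p.1 p.2 = none) := by
          simp only [Finset.mem_filter, Finset.mem_univ, true_and]
          rintro ⟨-, h⟩
          rw [h] at hsome
          simp at hsome
        have hss := Finset.card_lt_card ⟨hsub, fun h => hnotin (h hin)⟩
        omega
      · push_neg at hem
        refine ⟨C, fun u v huv => ?_⟩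
        have := hem u v huv
        exact Option.ne_none_iff_isSome.mp this
  refine main _ ⟨fun _ _ => none, fun _ _ => rfl, fun _ _ a h => (nomatch h),
    fun _ _ _ a h _ => nomatch h⟩ le_rfl

end Top

end VizingProof

/-- **Vizing's theorem.** Every finite simple graph `G` with maximum degree `Δ`
admits a proper edge coloring using at most `Δ + 1` colors: an assignment of
colors from `Fin (Δ + 1)` to the edges of `G` such that any two distinct edges
sharing a vertex receive different colors. -/
theorem vizing_edge_coloring {V : Type*} [Fintype V] [DecidableEq V]
    (G : SimpleGraph V) [DecidableRel G.Adj] :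
    ∃ φ : G.edgeSet → Fin (G.maxDegree + 1),
      ∀ e f : G.edgeSet, e ≠ f →
        (∃ v : V, v ∈ (e : Sym2 V) ∧ v ∈ (f : Sym2 V)) → φ e ≠ φ f := by
  classical
  obtain ⟨C, hC⟩ := VizingProof.total_coloring (G := G) (k := G.maxDegree + 1)
    (fun v => Nat.lt_succ_of_le (G.degree_le_maxDegree v))
  have key : ∀ e : Sym2 V, e ∈ G.edgeSet →
      (Sym2.lift ⟨C.c, C.symm⟩ e).isSome := by
    intro e
    refine Sym2.ind (fun u v h => ?_) e
    rw [Sym2.lift_mk]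
    exact hC u v ((G.mem_edgeSet).mp h)
  refine ⟨fun e => (Sym2.lift ⟨C.c, C.symm⟩ e.1).get (key e.1 e.2), ?_⟩
  rintro e f hne ⟨v, hve, hvf⟩ hφ
  obtain ⟨b, hb⟩ := Sym2.mem_iff_exists.mp hve
  obtain ⟨d, hd⟩ := Sym2.mem_iff_exists.mp hvf
  have hle : Sym2.lift ⟨C.c, C.symm⟩ (e : Sym2 V) = C.c v b := by rw [hb, Sym2.lift_mk]
  have hlf : Sym2.lift ⟨C.c, C.symm⟩ (f : Sym2 V) = C.c v d := by rw [hd, Sym2.lift_mk]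
  have he : C.c v b = some ((Sym2.lift ⟨C.c, C.symm⟩ e.1).get (key e.1 e.2)) := by
    rw [← hle, Option.some_get]
  have hf : C.c v d = some ((Sym2.lift ⟨C.c, C.symm⟩ f.1).get (key f.1 f.2)) := by
    rw [← hlf, Option.some_get]
  dsimp only at hφ
  rw [← hφ] at hf
  have : b = d := C.proper v b d _ he hf
  apply hne
  apply Subtype.ext
  rw [hb, hd, this]
end

section
/- Let G = (V, E) be a finite simple graph with maximum degree Δ, let F ⊆ E be a subset of edges, and let φ be a proper (Δ+1)-edge-coloring of F (i.e., φ : F → {1, …, Δ+1} assigns different colors to any two distinct edges of F sharing a vertex). Then for every edge e ∈ E \ F there exists a proper (Δ+1)-edge-coloring of F ∪ {e}. -/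
set_option linter.unusedSectionVars false

open SimpleGraph List

namespace VE

variable {V : Type*} [Fintype V] [DecidableEq V] {G : SimpleGraph V} [DecidableRel G.Adj]

/-- A partial proper edge coloring of `G` with `maxDegree + 1` colors. -/
structure PC (G : SimpleGraph V) [DecidableRel G.Adj] where
  col : V → V → Option (Fin (G.maxDegree + 1))
  symm : ∀ v w, col v w = col w v
  adj : ∀ v w a, col v w = some a → G.Adj v w
  proper : ∀ ⦃v w w'⦄, w ≠ w' → ∀ ⦃a⦄, col v w = some a → col v w' ≠ some a

/-- Color `a` is used at `v`. -/
def Used (c : PC G) (v : V) (a : Fin (G.maxDegree + 1)) : Prop :=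
  ∃ w, c.col v w = some a

lemma col_inj (c : PC G) {v w w' : V} {a : Fin (G.maxDegree + 1)}
    (h : c.col v w = some a) (h' : c.col v w' = some a) : w = w' := by
  by_contra hne
  exact c.proper hne h h'

lemma col_self (c : PC G) (v : V) : c.col v v = none := by
  cases h : c.col v v with
  | none => rfl
  | some a => exact absurd (c.adj _ _ _ h) (G.loopless.irrefl v)

lemma exists_free (c : PC G) (v : V) : ∃ a, ¬ Used c v a := by
  classical
  by_contra h
  push_neg at h
  have hmem : ∀ a : Fin (G.maxDegree + 1),
      (fun a : Fin (G.maxDegree + 1) => (h a).choose) a ∈ G.neighborFinset v := by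
    intro a
    exact (SimpleGraph.mem_neighborFinset _ _ _).2 (c.adj _ _ _ (h a).choose_spec)
  have hinj : Set.InjOn (fun a : Fin (G.maxDegree + 1) => (h a).choose)
      (Finset.univ : Finset (Fin (G.maxDegree + 1))) := by
    intro a _ b _ hab
    have ha := (h a).choose_spec
    have hb := (h b).choose_spec
    simp only at hab
    rw [hab] at ha
    exact Option.some.inj (ha.symm.trans hb)
  have hcard := Finset.card_le_card_of_injOn _ (fun a _ => hmem a) hinj
  rw [Finset.card_univ, Fintype.card_fin] at hcard
  have h1 : G.maxDegree + 1 ≤ G.degree v := hcard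
  have h2 := G.degree_le_maxDegree v
  omega

end VE

namespace VE

variable {V : Type*} [Fintype V] [DecidableEq V] {G : SimpleGraph V} [DecidableRel G.Adj]

/-- The special pair predicate for the (unordered) edge `{x, y}`. -/
def Sp (x y v w : V) : Prop := (v = x ∧ w = y) ∨ (v = y ∧ w = x)

instance (x y v w : V) : Decidable (Sp x y v w) := by unfold Sp; infer_instance

lemma sp_symm {x y v w : V} : Sp x y v w ↔ Sp x y w v := by unfold Sp; tauto

/-- The coloring function obtained by coloring edge `{x,y}` with `a`. -/
def setcol (c : PC G) (x y : V) (a : Fin (G.maxDegree + 1)) : V → V → Option (Fin (G.maxDegree + 1)) :=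
  fun v w => if Sp x y v w then some a else c.col v w

lemma setcol_def (c : PC G) (x y : V) (a : Fin (G.maxDegree + 1)) (v w : V) :
    setcol c x y a v w = if Sp x y v w then some a else c.col v w := rfl

/-- Color the edge `{x, y}` with color `a`. -/
def setc (c : PC G) (x y : V) (a : Fin (G.maxDegree + 1)) (hxy : G.Adj x y)
    (hx : ¬ Used c x a) (hy : ¬ Used c y a) : PC G where
  col := setcol c x y a
  symm := by
    intro v w
    rw [setcol_def, setcol_def]
    by_cases h : Sp x y v w
    · rw [if_pos h, if_pos (sp_symm.1 h)]
    · rw [if_neg h, if_neg (fun h' => h (sp_symm.2 h')), c.symm]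
  adj := by
    intro v w b h
    rw [setcol_def] at h
    by_cases hs : Sp x y v w
    · rcases hs with ⟨rfl, rfl⟩ | ⟨rfl, rfl⟩
      · exact hxy
      · exact hxy.symm
    · rw [if_neg hs] at h; exact c.adj _ _ _ h
  proper := by
    intro v w w' hne b h h'
    rw [setcol_def] at h h'
    by_cases h1 : Sp x y v w <;> by_cases h2 : Sp x y v w'
    · have hxyne := hxy.ne
      rcases h1 with ⟨e1, e2⟩ | ⟨e1, e2⟩ <;> rcases h2 with ⟨f1, f2⟩ <;> simp_all
    · rw [if_pos h1] at h
      rw [if_neg h2] at h'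
      have hb : b = a := (Option.some.inj h).symm
      subst hb
      rcases h1 with ⟨rfl, _⟩ | ⟨rfl, _⟩
      · exact hx ⟨w', h'⟩
      · exact hy ⟨w', h'⟩
    · rw [if_neg h1] at h
      rw [if_pos h2] at h'
      have hb : b = a := (Option.some.inj h').symm
      subst hb
      rcases h2 with ⟨rfl, _⟩ | ⟨rfl, _⟩
      · exact hx ⟨w, h⟩
      · exact hy ⟨w, h⟩
    · rw [if_neg h1] at h
      rw [if_neg h2] at h'
      exact c.proper hne h h'

lemma setc_col (c : PC G) (x y : V) (a : Fin (G.maxDegree + 1)) (hxy : G.Adj x y)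
    (hx : ¬ Used c x a) (hy : ¬ Used c y a) (v w : V) :
    (setc c x y a hxy hx hy).col v w = if Sp x y v w then some a else c.col v w := rfl

/-- Remove the color of edge `{x, y}`. -/
def unset (c : PC G) (x y : V) : PC G where
  col v w := if Sp x y v w then none else c.col v w
  symm := by
    intro v w
    show (if Sp x y v w then none else c.col v w) = (if Sp x y w v then none else c.col w v)
    by_cases h : Sp x y v w
    · rw [if_pos h, if_pos (sp_symm.1 h)]
    · rw [if_neg h, if_neg (fun h' => h (sp_symm.2 h')), c.symm]
  adj := by
    intro v w b h
    replace h : (if Sp x y v w then none else c.col v w) = some b := h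
    by_cases hs : Sp x y v w
    · rw [if_pos hs] at h; exact absurd h (by simp)
    · rw [if_neg hs] at h; exact c.adj _ _ _ h
  proper := by
    intro v w w' hne b h h'
    replace h : (if Sp x y v w then none else c.col v w) = some b := h
    replace h' : (if Sp x y v w' then none else c.col v w') = some b := h'
    by_cases h1 : Sp x y v w
    · rw [if_pos h1] at h; exact absurd h (by simp)
    · by_cases h2 : Sp x y v w'
      · rw [if_pos h2] at h'; exact absurd h' (by simp)
      · rw [if_neg h1] at h; rw [if_neg h2] at h'
        exact c.proper hne h h'

lemma unset_col (c : PC G) (x y : V) (v w : V) :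
    (unset c x y).col v w = if Sp x y v w then none else c.col v w := rfl

end VE

namespace VE

variable {V : Type*} [Fintype V] [DecidableEq V] {G : SimpleGraph V} [DecidableRel G.Adj]

/-- `FanRest c x y l`: `l` is a valid continuation of a fan at `x` whose previous
vertex is `y`: each vertex `z` in `l` is adjacent to `x`, the edge `x z` is colored,
and its color is free at the preceding vertex. -/
def FanRest (c : PC G) (x : V) : V → List V → Prop
  | _, [] => True
  | y, z :: l => G.Adj x z ∧ (∃ γ, c.col x z = some γ ∧ ¬ Used c y γ) ∧ FanRest c x z l

lemma fanRest_mem_adj {c : PC G} {x : V} :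
    ∀ {y : V} {l : List V}, FanRest c x y l → ∀ w ∈ l, G.Adj x w := by
  intro y l
  induction l generalizing y with
  | nil => intro _ w hw; simp at hw
  | cons z l ih =>
    rintro ⟨hadj, _, hrest⟩ w hw
    rcases List.mem_cons.1 hw with rfl | hw
    · exact hadj
    · exact ih hrest w hw

lemma fanRest_mem_col {c : PC G} {x : V} :
    ∀ {y : V} {l : List V}, FanRest c x y l → ∀ w ∈ l, ∃ γ, c.col x w = some γ := by
  intro y l
  induction l generalizing y with
  | nil => intro _ w hw; simp at hw
  | cons z l ih =>
    rintro ⟨_, ⟨γ, hγ, _⟩, hrest⟩ w hw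
    rcases List.mem_cons.1 hw with rfl | hw
    · exact ⟨γ, hγ⟩
    · exact ih hrest w hw

lemma fanRest_congr {c c' : PC G} {x : V} :
    ∀ {y : V} {l : List V},
    (∀ w ∈ l, c'.col x w = c.col x w) →
    (∀ v ∈ y :: l, ∀ w ∈ l, ∀ γ, c.col x w = some γ → Used c' v γ → Used c v γ) →
    FanRest c x y l → FanRest c' x y l := by
  intro y l
  induction l generalizing y with
  | nil => intro _ _ _; trivial
  | cons z l ih =>
    rintro hcol hused ⟨hadj, ⟨γ, hγ, hfree⟩, hrest⟩
    refine ⟨hadj, ⟨γ, ?_, ?_⟩, ?_⟩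
    · rw [hcol z List.mem_cons_self]; exact hγ
    · intro hu
      exact hfree (hused y List.mem_cons_self z List.mem_cons_self γ hγ hu)
    · refine ih (fun w hw => hcol w (List.mem_cons_of_mem _ hw)) ?_ hrest
      intro v hv w hw γ' hγ' hu
      exact hused v (List.mem_cons_of_mem _ hv) w (List.mem_cons_of_mem _ hw) γ' hγ' hu

lemma fanRest_append {c : PC G} {x : V} :
    ∀ (l₁ : List V) {y : V} (l₂ : List V),
    FanRest c x y (l₁ ++ l₂) ↔
      FanRest c x y l₁ ∧ FanRest c x ((y :: l₁).getLast (List.cons_ne_nil _ _)) l₂ := by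
  intro l₁
  induction l₁ with
  | nil => intro y l₂; simp [FanRest]
  | cons a l₁ ih =>
    intro y l₂
    have hlast : (y :: a :: l₁).getLast (List.cons_ne_nil _ _)
        = (a :: l₁).getLast (List.cons_ne_nil _ _) := List.getLast_cons _
    rw [List.cons_append]
    show (G.Adj x a ∧ (∃ γ, c.col x a = some γ ∧ ¬ Used c y γ) ∧ FanRest c x a (l₁ ++ l₂)) ↔
      ((G.Adj x a ∧ (∃ γ, c.col x a = some γ ∧ ¬ Used c y γ) ∧ FanRest c x a l₁) ∧
        FanRest c x ((y :: a :: l₁).getLast (List.cons_ne_nil _ _)) l₂)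
    rw [ih, hlast]
    tauto

end VE

namespace VE

variable {V : Type*} [Fintype V] [DecidableEq V] {G : SimpleGraph V} [DecidableRel G.Adj]

/-- Rotating a fan: if `y₀ :: l` is a fan at `x` with `x y₀` uncolored, and `d` is free
at `x` and at the last vertex of the fan, then we can recolor so that exactly the edge
`x y₀` is added to the domain. -/
lemma rotate {x : V} :
    ∀ (l : List V) (c : PC G) (y₀ : V), G.Adj x y₀ → c.col x y₀ = none →
    (y₀ :: l).Nodup → FanRest c x y₀ l →
    ∀ d, ¬ Used c x d → ¬ Used c ((y₀ :: l).getLast (List.cons_ne_nil _ _)) d →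
    ∃ c' : PC G, ∀ v w, c'.col v w = none ↔ (c.col v w = none ∧ ¬ Sp x y₀ v w) := by
  intro l
  induction l with
  | nil =>
    intro c y₀ hadj hnone _ _ d hdx hdy
    simp only [List.getLast_singleton] at hdy
    refine ⟨setc c x y₀ d hadj hdx hdy, ?_⟩
    intro v w
    rw [setc_col]
    by_cases hs : Sp x y₀ v w
    · rw [if_pos hs]; simp [hs]
    · rw [if_neg hs]; simp [hs]
  | cons z l ih =>
    intro c y₀ hadj hnone hnd hfan d hdx hdy
    obtain ⟨hadjz, ⟨γ, hγcol, hγfree⟩, hrest⟩ := hfan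
    have hxny₀ : x ≠ y₀ := hadj.ne
    have hxnz : x ≠ z := hadjz.ne
    have hy₀nz : y₀ ≠ z := by
      intro h; rw [← h] at hγcol; rw [hnone] at hγcol; exact nomatch hγcol
    have hy₀nl : y₀ ∉ z :: l := (List.nodup_cons.1 hnd).1
    have hznl : z ∉ l := (List.nodup_cons.1 (List.nodup_cons.1 hnd).2).1
    -- step 1: uncolor x z
    set c₁ := unset c x z with hc₁
    -- step 2: color x y₀ with γ
    have hU1x : ¬ Used c₁ x γ := by
      rintro ⟨w, hw⟩
      rw [unset_col] at hw
      by_cases hs : Sp x z x w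
      · rw [if_pos hs] at hw; exact nomatch hw
      · rw [if_neg hs] at hw
        have : w = z := col_inj c hw hγcol
        exact hs (Or.inl ⟨rfl, this⟩)
    have hU1y : ¬ Used c₁ y₀ γ := by
      rintro ⟨w, hw⟩
      rw [unset_col] at hw
      by_cases hs : Sp x z y₀ w
      · rw [if_pos hs] at hw; exact nomatch hw
      · rw [if_neg hs] at hw; exact hγfree ⟨w, hw⟩
    set c₂ := setc c₁ x y₀ γ hadj hU1x hU1y with hc₂
    -- key fact: for vertices not equal to x, y₀, Used in c₂ implies Used in c
    have hUsedTrans : ∀ v, v ≠ x → v ≠ y₀ → ∀ a, Used c₂ v a → Used c v a := by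
      rintro v hvx hvy a ⟨w, hw⟩
      rw [hc₂, setc_col] at hw
      by_cases hs : Sp x y₀ v w
      · rcases hs with ⟨h1, _⟩ | ⟨h1, _⟩
        · exact absurd h1 hvx
        · exact absurd h1 hvy
      · rw [if_neg hs, unset_col] at hw
        by_cases hs' : Sp x z v w
        · rw [if_pos hs'] at hw; exact nomatch hw
        · rw [if_neg hs'] at hw; exact ⟨w, hw⟩
    -- edges at x to fan vertices other than z, y₀ are unchanged
    have hColTrans : ∀ w, w ≠ y₀ → w ≠ z → c₂.col x w = c.col x w := by
      intro w hwy hwz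
      rw [hc₂, setc_col, if_neg, unset_col, if_neg]
      · rintro (⟨_, h2⟩ | ⟨h1, _⟩)
        · exact hwz h2
        · exact hxnz h1
      · rintro (⟨_, h2⟩ | ⟨h1, _⟩)
        · exact hwy h2
        · exact hxny₀ h1
    -- apply the induction hypothesis to the fan `z :: l` for `c₂`
    have hc₂z : c₂.col x z = none := by
      rw [hc₂, setc_col, if_neg, unset_col,
        if_pos (show Sp x z x z from Or.inl ⟨rfl, rfl⟩)]
      rintro (⟨_, h2⟩ | ⟨h1, _⟩)
      · exact hy₀nz h2.symm
      · exact hxny₀ h1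
    have hAdjAll : ∀ v ∈ z :: l, G.Adj x v := by
      intro v hv
      rcases List.mem_cons.1 hv with rfl | hv
      · exact hadjz
      · exact fanRest_mem_adj hrest v hv
    have hNe : ∀ v ∈ z :: l, v ≠ x ∧ v ≠ y₀ := by
      intro v hv
      exact ⟨(hAdjAll v hv).ne', fun h => hy₀nl (h ▸ hv)⟩
    have hfan₂ : FanRest c₂ x z l := by
      refine fanRest_congr ?_ ?_ hrest
      · intro w hw
        exact hColTrans w (hNe w (List.mem_cons_of_mem _ hw)).2
          (fun h => hznl (h ▸ hw))
      · intro v hv w _ γ' _ hu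
        exact hUsedTrans v (hNe v hv).1 (hNe v hv).2 γ' hu
    have hlast : (y₀ :: z :: l).getLast (List.cons_ne_nil _ _)
        = (z :: l).getLast (List.cons_ne_nil _ _) := List.getLast_cons _
    rw [hlast] at hdy
    have hlastmem : (z :: l).getLast (List.cons_ne_nil _ _) ∈ z :: l :=
      List.getLast_mem _
    -- d is free at x for c₂
    have hdx₂ : ¬ Used c₂ x d := by
      rintro ⟨w, hw⟩
      rw [hc₂, setc_col] at hw
      by_cases hs : Sp x y₀ x w
      · rw [if_pos hs] at hw
        have : γ = d := Option.some.inj hw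
        exact hdx ⟨z, this ▸ hγcol⟩
      · rw [if_neg hs, unset_col] at hw
        by_cases hs' : Sp x z x w
        · rw [if_pos hs'] at hw; exact nomatch hw
        · rw [if_neg hs'] at hw; exact hdx ⟨w, hw⟩
    -- d is free at the last vertex for c₂
    have hdy₂ : ¬ Used c₂ ((z :: l).getLast (List.cons_ne_nil _ _)) d := by
      intro hu
      exact hdy (hUsedTrans _ (hNe _ hlastmem).1 (hNe _ hlastmem).2 d hu)
    obtain ⟨c₃, hc₃⟩ := ih c₂ z hadjz hc₂z (List.nodup_cons.1 hnd).2 hfan₂ d hdx₂ hdy₂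
    refine ⟨c₃, ?_⟩
    intro v w
    rw [hc₃ v w]
    have h₂none : c₂.col v w = none ↔ (¬ Sp x y₀ v w ∧ (Sp x z v w ∨ c.col v w = none)) := by
      rw [hc₂, setc_col, unset_col]
      by_cases hs : Sp x y₀ v w
      · rw [if_pos hs]; simp [hs]
      · rw [if_neg hs]
        by_cases hs' : Sp x z v w
        · rw [if_pos hs']; simp [hs, hs']
        · rw [if_neg hs']; simp [hs, hs']
    rw [h₂none]
    have hczvw : Sp x z v w → c.col v w ≠ none := by
      rintro (⟨rfl, rfl⟩ | ⟨rfl, rfl⟩)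
      · rw [hγcol]; simp
      · rw [c.symm, hγcol]; simp
    constructor
    · rintro ⟨⟨hnsp, hor⟩, hnsp'⟩
      rcases hor with hsp | hn
      · exact absurd hsp hnsp'
      · exact ⟨hn, hnsp⟩
    · rintro ⟨hn, hnsp⟩
      exact ⟨⟨hnsp, Or.inr hn⟩, fun hsp => hczvw hsp hn⟩

end VE

namespace VE

variable {V : Type*} [Fintype V] [DecidableEq V] {G : SimpleGraph V} [DecidableRel G.Adj]

/-- The graph of edges colored `α` or `β`. -/
def kg (c : PC G) (α β : Fin (G.maxDegree + 1)) : SimpleGraph V where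
  Adj v w := c.col v w = some α ∨ c.col v w = some β
  symm := by
    constructor
    intro v w h
    change c.col v w = some α ∨ c.col v w = some β at h
    change c.col w v = some α ∨ c.col w v = some β
    rwa [c.symm w v]
  loopless := by
    constructor
    intro v h
    change c.col v v = some α ∨ c.col v v = some β at h
    rw [col_self] at h
    rcases h with h | h <;> exact nomatch h

lemma kg_adj {c : PC G} {α β : Fin (G.maxDegree + 1)} {v w : V} :
    (kg c α β).Adj v w ↔ (c.col v w = some α ∨ c.col v w = some β) := Iff.rfl

open Classical in
/-- Swap colors `α` and `β` on the Kempe component of `x`. -/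
noncomputable def swap (c : PC G) (α β : Fin (G.maxDegree + 1)) (x : V) : PC G where
  col v w := if (c.col v w = some α ∨ c.col v w = some β) ∧ (kg c α β).Reachable x v
    then (if c.col v w = some α then some β else some α) else c.col v w
  symm := by
    intro v w
    by_cases hP : (c.col v w = some α ∨ c.col v w = some β)
    · have hadj : (kg c α β).Adj v w := hP
      have hR : (kg c α β).Reachable x v ↔ (kg c α β).Reachable x w :=
        ⟨fun h => h.trans hadj.reachable, fun h => h.trans hadj.symm.reachable⟩
      rw [show c.col w v = c.col v w from (c.symm v w).symm]
      exact if_congr (and_congr_right fun _ => hR) rfl rfl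
    · rw [if_neg (fun h => hP h.1), c.symm v w, if_neg]
      intro h
      rw [← c.symm v w] at h
      exact hP h.1
  adj := by
    intro v w a h
    split_ifs at h with h1 h2
    · rcases h1.1 with hh | hh <;> exact c.adj _ _ _ hh
    · rcases h1.1 with hh | hh <;> exact c.adj _ _ _ hh
    · exact c.adj _ _ _ h
  proper := by
    intro v w w' hne a h h'
    by_cases hR : (kg c α β).Reachable x v
    · by_cases h1 : (c.col v w = some α ∨ c.col v w = some β) <;>
        by_cases h2 : (c.col v w' = some α ∨ c.col v w' = some β)
      · rw [if_pos ⟨h1, hR⟩] at h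
        rw [if_pos ⟨h2, hR⟩] at h'
        by_cases e1 : c.col v w = some α <;> by_cases e2 : c.col v w' = some α
        · exact hne (col_inj c e1 e2)
        · rw [if_pos e1] at h
          rw [if_neg e2] at h'
          have hβ : c.col v w' = some β := h2.resolve_left e2
          have : (β : Fin (G.maxDegree + 1)) = α := by
            have := (Option.some.inj h).trans (Option.some.inj h').symm
            exact this
          rw [this] at hβ
          exact e2 hβ
        · rw [if_neg e1] at h
          rw [if_pos e2] at h'
          have hβ : c.col v w = some β := h1.resolve_left e1
          have : (α : Fin (G.maxDegree + 1)) = β := by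
            have := (Option.some.inj h).trans (Option.some.inj h').symm
            exact this
          rw [← this] at hβ
          exact e1 hβ
        · have hβ : c.col v w = some β := h1.resolve_left e1
          have hβ' : c.col v w' = some β := h2.resolve_left e2
          exact hne (col_inj c hβ hβ')
      · rw [if_pos ⟨h1, hR⟩] at h
        rw [if_neg (fun hh => h2 hh.1)] at h'
        apply h2
        split_ifs at h with e1
        · right; rw [h', ← h]
        · left; rw [h', ← h]
      · rw [if_neg (fun hh => h1 hh.1)] at h
        rw [if_pos ⟨h2, hR⟩] at h'
        apply h1
        split_ifs at h' with e1
        · right; rw [h, ← h']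
        · left; rw [h, ← h']
      · rw [if_neg (fun hh => h1 hh.1)] at h
        rw [if_neg (fun hh => h2 hh.1)] at h'
        exact c.proper hne h h'
    · rw [if_neg (fun hh => hR hh.2)] at h
      rw [if_neg (fun hh => hR hh.2)] at h'
      exact c.proper hne h h'

end VE

namespace VE

variable {V : Type*} [Fintype V] [DecidableEq V] {G : SimpleGraph V} [DecidableRel G.Adj]
variable {c : PC G} {α β : Fin (G.maxDegree + 1)} {x v w : V}

open Classical in
lemma swap_col (c : PC G) (α β : Fin (G.maxDegree + 1)) (x v w : V) :
    (swap c α β x).col v w =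
      if (c.col v w = some α ∨ c.col v w = some β) ∧ (kg c α β).Reachable x v
      then (if c.col v w = some α then some β else some α) else c.col v w := rfl

lemma swap_none_iff : (swap c α β x).col v w = none ↔ c.col v w = none := by
  rw [swap_col]
  by_cases h : (c.col v w = some α ∨ c.col v w = some β) ∧ (kg c α β).Reachable x v
  · rw [if_pos h]
    refine iff_of_false ?_ ?_
    · intro hh; split_ifs at hh <;> exact Option.noConfusion hh
    · intro hh; rcases h.1 with h' | h' <;> rw [hh] at h' <;> exact nomatch h'
  · rw [if_neg h]

lemma swap_col_of_not_reach (hR : ¬ (kg c α β).Reachable x v) :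
    (swap c α β x).col v w = c.col v w := by
  rw [swap_col, if_neg (fun hh => hR hh.2)]

lemma swap_col_some_iff_of_ne {γ : Fin (G.maxDegree + 1)} (hγα : γ ≠ α) (hγβ : γ ≠ β) :
    (swap c α β x).col v w = some γ ↔ c.col v w = some γ := by
  rw [swap_col]
  by_cases h : (c.col v w = some α ∨ c.col v w = some β) ∧ (kg c α β).Reachable x v
  · rw [if_pos h]
    by_cases h2 : c.col v w = some α
    · rw [if_pos h2]
      constructor
      · intro hh; exact absurd (Option.some.inj hh).symm hγβ
      · intro hh; rw [hh] at h2; exact absurd (Option.some.inj h2) hγα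
    · rw [if_neg h2]
      constructor
      · intro hh; exact absurd (Option.some.inj hh).symm hγα
      · intro hh
        have h3 := h.1.resolve_left h2
        rw [hh] at h3
        exact absurd (Option.some.inj h3) hγβ
  · rw [if_neg h]

lemma swap_col_alpha (hαβ : α ≠ β) (hR : (kg c α β).Reachable x v) :
    (swap c α β x).col v w = some α ↔ c.col v w = some β := by
  rw [swap_col]
  by_cases hP : (c.col v w = some α ∨ c.col v w = some β)
  · rw [if_pos ⟨hP, hR⟩]
    by_cases e : c.col v w = some α
    · rw [if_pos e]
      constructor
      · intro hh; exact absurd (Option.some.inj hh).symm hαβ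
      · intro hh; rw [hh] at e; exact absurd (Option.some.inj e).symm hαβ
    · rw [if_neg e]
      exact ⟨fun _ => hP.resolve_left e, fun _ => rfl⟩
  · rw [if_neg (fun hh => hP hh.1)]
    exact ⟨fun hh => absurd (Or.inl hh) hP, fun hh => absurd (Or.inr hh) hP⟩

lemma swap_col_beta (hαβ : α ≠ β) (hR : (kg c α β).Reachable x v) :
    (swap c α β x).col v w = some β ↔ c.col v w = some α := by
  rw [swap_col]
  by_cases hP : (c.col v w = some α ∨ c.col v w = some β)
  · rw [if_pos ⟨hP, hR⟩]
    by_cases e : c.col v w = some α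
    · rw [if_pos e]
      exact ⟨fun _ => e, fun _ => rfl⟩
    · rw [if_neg e]
      constructor
      · intro hh; exact absurd (Option.some.inj hh) hαβ
      · intro hh; exact absurd hh e
  · rw [if_neg (fun hh => hP hh.1)]
    exact ⟨fun hh => absurd (Or.inr hh) hP, fun hh => absurd (Or.inl hh) hP⟩

lemma used_swap_not_reach (hR : ¬ (kg c α β).Reachable x v)
    (a : Fin (G.maxDegree + 1)) : Used (swap c α β x) v a ↔ Used c v a :=
  exists_congr fun _ => by rw [swap_col_of_not_reach hR]

lemma used_swap_alpha (hαβ : α ≠ β) (hR : (kg c α β).Reachable x v) :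
    Used (swap c α β x) v α ↔ Used c v β :=
  exists_congr fun _ => swap_col_alpha hαβ hR

lemma used_swap_beta (hαβ : α ≠ β) (hR : (kg c α β).Reachable x v) :
    Used (swap c α β x) v β ↔ Used c v α :=
  exists_congr fun _ => swap_col_beta hαβ hR

lemma used_swap_of_ne {γ : Fin (G.maxDegree + 1)} (hγα : γ ≠ α) (hγβ : γ ≠ β) :
    Used (swap c α β x) v γ ↔ Used c v γ :=
  exists_congr fun _ => swap_col_some_iff_of_ne hγα hγβ

end VE

namespace VE

variable {V : Type*} [Fintype V] [DecidableEq V]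

/-- Helper: a path cannot end at a degree-one vertex `a` along a second walk. -/
lemma leaf_nil {H : SimpleGraph V} {a b prev : V} (hab : a ≠ b)
    (ha : ∀ w w', H.Adj a w → H.Adj a w' → w = w')
    (r : H.Walk a b) (hadj : H.Adj prev a) (hr : r.IsPath) (hprev : prev ∉ r.support) :
    False := by
  cases r with
  | nil => exact hab rfl
  | @cons _ w _ h' r' =>
    have hw : w ∈ r'.support := r'.start_mem_support
    have hprev' : prev ∉ r'.support := by
      intro hp
      exact hprev (List.mem_cons_of_mem _ hp)
    have : prev = w := ha prev w hadj.symm h'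
    exact hprev' (by rw [this]; exact hw)

/-- In a graph with maximum degree ≤ 2, two paths from a common vertex (entered
from `prev`) cannot end at two distinct leaves. -/
lemma two_paths {H : SimpleGraph V}
    (hmax : ∀ v w₁ w₂ w₃, H.Adj v w₁ → H.Adj v w₂ → H.Adj v w₃ →
      w₁ = w₂ ∨ w₁ = w₃ ∨ w₂ = w₃)
    {a b : V} (hab : a ≠ b)
    (ha : ∀ w w', H.Adj a w → H.Adj a w' → w = w')
    (hb : ∀ w w', H.Adj b w → H.Adj b w' → w = w') :
    ∀ (m : ℕ) (u : V) (q : H.Walk u a) (r : H.Walk u b) (prev : V),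
    q.length ≤ m → H.Adj prev u → q.IsPath → r.IsPath →
    prev ∉ q.support → prev ∉ r.support → False := by
  intro m
  induction m with
  | zero =>
    intro u q r prev hlen hadj hq hr hpq hpr
    cases q with
    | nil => exact leaf_nil hab ha r hadj hr hpr
    | cons h q' => simp [SimpleGraph.Walk.length_cons] at hlen
  | succ m ih =>
    intro u q r prev hlen hadj hq hr hpq hpr
    cases q with
    | nil => exact leaf_nil hab ha r hadj hr hpr
    | @cons _ w₁ _ h q' =>
      cases r with
      | nil => exact leaf_nil hab.symm hb (SimpleGraph.Walk.cons h q') hadj hq hpq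
      | @cons _ w₂ _ h' r' =>
        have hw₁ : w₁ ∈ q'.support := q'.start_mem_support
        have hw₂ : w₂ ∈ r'.support := r'.start_mem_support
        have hpw₁ : prev ≠ w₁ := by
          intro hp; refine hpq ?_
          rw [SimpleGraph.Walk.support_cons, hp]
          exact List.mem_cons_of_mem _ hw₁
        have hpw₂ : prev ≠ w₂ := by
          intro hp; refine hpr ?_
          rw [SimpleGraph.Walk.support_cons, hp]
          exact List.mem_cons_of_mem _ hw₂
        have hw : w₁ = w₂ := by
          rcases hmax u prev w₁ w₂ hadj.symm h h' with h1 | h1 | h1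
          · exact absurd h1 hpw₁
          · exact absurd h1 hpw₂
          · exact h1
        subst hw
        have hq' := (SimpleGraph.Walk.cons_isPath_iff h q').1 hq
        have hr' := (SimpleGraph.Walk.cons_isPath_iff h' r').1 hr
        refine ih w₁ q' r' u ?_ h hq'.1 hr'.1 hq'.2 hr'.2
        have : q'.length + 1 ≤ m + 1 := by
          simpa [SimpleGraph.Walk.length_cons] using hlen
        omega

/-- In a graph with maximum degree at most 2, there cannot be three distinct,
pairwise-reachable vertices of degree at most 1. -/
lemma no_three_leaves {H : SimpleGraph V}
    (hmax : ∀ v w₁ w₂ w₃, H.Adj v w₁ → H.Adj v w₂ → H.Adj v w₃ →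
      w₁ = w₂ ∨ w₁ = w₃ ∨ w₂ = w₃)
    {x a b : V} (hxa : x ≠ a) (hxb : x ≠ b) (hab : a ≠ b)
    (hx : ∀ w w', H.Adj x w → H.Adj x w' → w = w')
    (ha : ∀ w w', H.Adj a w → H.Adj a w' → w = w')
    (hb : ∀ w w', H.Adj b w → H.Adj b w' → w = w')
    (h1 : H.Reachable x a) (h2 : H.Reachable x b) : False := by
  obtain ⟨q0⟩ := h1
  obtain ⟨r0⟩ := h2
  have hq : q0.bypass.IsPath := q0.bypass_isPath
  have hr : r0.bypass.IsPath := r0.bypass_isPath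
  revert hq hr
  generalize q0.bypass = q
  generalize r0.bypass = r
  intro hq hr
  cases q with
  | nil => exact absurd rfl hxa
  | @cons _ w₁ _ h q' =>
    cases r with
    | nil => exact absurd rfl hxb
    | @cons _ w₂ _ h' r' =>
      have hw : w₁ = w₂ := hx w₁ w₂ h h'
      subst hw
      have hq' := (SimpleGraph.Walk.cons_isPath_iff h q').1 hq
      have hr' := (SimpleGraph.Walk.cons_isPath_iff h' r').1 hr
      exact two_paths hmax hab ha hb q'.length w₁ q' r' x le_rfl h hq'.1 hr'.1 hq'.2 hr'.2

end VE

namespace VE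

variable {V : Type*} [Fintype V] [DecidableEq V] {G : SimpleGraph V} [DecidableRel G.Adj]

lemma kg_maxdeg_two (c : PC G) (α β : Fin (G.maxDegree + 1)) :
    ∀ v w₁ w₂ w₃, (kg c α β).Adj v w₁ → (kg c α β).Adj v w₂ → (kg c α β).Adj v w₃ →
      w₁ = w₂ ∨ w₁ = w₃ ∨ w₂ = w₃ := by
  intro v w₁ w₂ w₃ h1 h2 h3
  rcases h1 with e1 | e1 <;> rcases h2 with e2 | e2 <;> rcases h3 with e3 | e3
  · exact Or.inl (col_inj c e1 e2)
  · exact Or.inl (col_inj c e1 e2)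
  · exact Or.inr (Or.inl (col_inj c e1 e3))
  · exact Or.inr (Or.inr (col_inj c e2 e3))
  · exact Or.inr (Or.inr (col_inj c e2 e3))
  · exact Or.inr (Or.inl (col_inj c e1 e3))
  · exact Or.inl (col_inj c e1 e2)
  · exact Or.inl (col_inj c e1 e2)

lemma kg_deg_one_left {c : PC G} {α β : Fin (G.maxDegree + 1)} {v : V}
    (h : ¬ Used c v α) :
    ∀ w w', (kg c α β).Adj v w → (kg c α β).Adj v w' → w = w' := by
  intro w w' h1 h2
  have e1 : c.col v w = some β := h1.resolve_left (fun hh => h ⟨w, hh⟩)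
  have e2 : c.col v w' = some β := h2.resolve_left (fun hh => h ⟨w', hh⟩)
  exact col_inj c e1 e2

lemma kg_deg_one_right {c : PC G} {α β : Fin (G.maxDegree + 1)} {v : V}
    (h : ¬ Used c v β) :
    ∀ w w', (kg c α β).Adj v w → (kg c α β).Adj v w' → w = w' := by
  intro w w' h1 h2
  have e1 : c.col v w = some α := h1.resolve_right (fun hh => h ⟨w, hh⟩)
  have e2 : c.col v w' = some α := h2.resolve_right (fun hh => h ⟨w', hh⟩)
  exact col_inj c e1 e2

/-- A maximal fan exists. -/
lemma exists_max_fan (c : PC G) (x y₀ : V) (hadj : G.Adj x y₀) :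
    ∃ l : List V, (y₀ :: l).Nodup ∧ FanRest c x y₀ l ∧
      ∀ z γ, c.col x z = some γ →
        ¬ Used c ((y₀ :: l).getLast (List.cons_ne_nil _ _)) γ → z ∈ y₀ :: l := by
  suffices h : ∀ (m : ℕ) (l : List V), (y₀ :: l).Nodup → FanRest c x y₀ l →
      Fintype.card V ≤ m + (y₀ :: l).length →
      ∃ l' : List V, (y₀ :: l').Nodup ∧ FanRest c x y₀ l' ∧
        ∀ z γ, c.col x z = some γ →
          ¬ Used c ((y₀ :: l').getLast (List.cons_ne_nil _ _)) γ → z ∈ y₀ :: l' by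
    refine h (Fintype.card V) [] (by simp) trivial (by simp)
  intro m
  induction m with
  | zero =>
    intro l hnd hfan hcard
    refine ⟨l, hnd, hfan, fun z γ _ _ => ?_⟩
    have hlen : (y₀ :: l).length = Fintype.card V :=
      le_antisymm (hnd.length_le_card) (by simpa using hcard)
    have : (y₀ :: l).toFinset = Finset.univ := by
      apply Finset.eq_univ_of_card
      rw [List.toFinset_card_of_nodup hnd, hlen]
    have : z ∈ (y₀ :: l).toFinset := this ▸ Finset.mem_univ z
    simpa using this
  | succ m ih =>
    intro l hnd hfan hcard
    by_cases hmaxl : ∀ z γ, c.col x z = some γ →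
        ¬ Used c ((y₀ :: l).getLast (List.cons_ne_nil _ _)) γ → z ∈ y₀ :: l
    · exact ⟨l, hnd, hfan, hmaxl⟩
    · push_neg at hmaxl
      obtain ⟨z, γ, hcol, hfree, hz⟩ := hmaxl
      have hadjz : G.Adj x z := c.adj _ _ _ hcol
      have hnd' : (y₀ :: (l ++ [z])).Nodup := by
        rw [show y₀ :: (l ++ [z]) = (y₀ :: l) ++ [z] from rfl]
        rw [List.nodup_append]
        exact ⟨hnd, List.nodup_singleton z, by simp at hz ⊢; exact ⟨fun h => hz.1 h.symm, fun a ha h => hz.2 (h ▸ ha)⟩⟩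
      have hfan' : FanRest c x y₀ (l ++ [z]) := by
        rw [fanRest_append]
        exact ⟨hfan, hadjz, ⟨γ, hcol, hfree⟩, trivial⟩
      refine ih (l ++ [z]) hnd' hfan' ?_
      simp only [List.length_cons, List.length_append, List.length_singleton] at hcard ⊢
      omega

/-- The key step: any uncolored edge of `G` can be added to the domain of a
partial proper coloring after recoloring. -/
theorem extend_one (c : PC G) (x y₀ : V) (hadjxy : G.Adj x y₀)
    (hnone : c.col x y₀ = none) :
    ∃ c' : PC G, ∀ v w, c'.col v w = none ↔ (c.col v w = none ∧ ¬ Sp x y₀ v w) := by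
  obtain ⟨l, hnd, hfan, hmaxl⟩ := exists_max_fan c x y₀ hadjxy
  obtain ⟨α, hα⟩ := exists_free c x
  obtain ⟨β, hβ⟩ := exists_free c ((y₀ :: l).getLast (List.cons_ne_nil _ _))
  by_cases hβx : Used c x β
  case neg => exact rotate l c y₀ hadjxy hnone hnd hfan β hβx hβ
  -- β is used at x; by maximality the β-edge at x goes to a fan vertex z ≠ y₀
  obtain ⟨z, hzcol⟩ := hβx
  have hzmem : z ∈ y₀ :: l := hmaxl z β hzcol hβ
  have hzney₀ : z ≠ y₀ := by
    intro h; rw [h, hnone] at hzcol; exact nomatch hzcol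
  have hzl : z ∈ l := (List.mem_cons.1 hzmem).resolve_left hzney₀
  obtain ⟨l₁, l₂, rfl⟩ := List.append_of_mem hzl
  have hαβ : α ≠ β := fun h => hα (h ▸ ⟨z, hzcol⟩)
  -- nodup decomposition
  have hnd' := hnd
  rw [show (y₀ :: (l₁ ++ z :: l₂)) = (y₀ :: l₁) ++ (z :: l₂) from rfl,
    List.nodup_append] at hnd'
  obtain ⟨hnd₁, hnd₂, hdisj⟩ := hnd'
  have hznl₁ : z ∉ l₁ := fun h =>
    hdisj z (List.mem_cons_of_mem _ h) z List.mem_cons_self rfl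
  have hznl₂ : z ∉ l₂ := (List.nodup_cons.1 hnd₂).1
  -- the last vertex of the fan
  have hyk2 : (y₀ :: (l₁ ++ z :: l₂)).getLast (List.cons_ne_nil _ _)
      = (z :: l₂).getLast (List.cons_ne_nil _ _) :=
    List.getLast_append_of_ne_nil (l := y₀ :: l₁) (List.cons_ne_nil _ _) (List.cons_ne_nil _ _)
  rw [hyk2] at hβ hmaxl
  set yk := (z :: l₂).getLast (List.cons_ne_nil _ _) with hyk
  have hykmem : yk ∈ z :: l₂ := List.getLast_mem _
  -- split the fan at z
  have hfan' := hfan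
  rw [fanRest_append l₁ (z :: l₂)] at hfan'
  obtain ⟨hfan₁, hfanz⟩ := hfan'
  set p := (y₀ :: l₁).getLast (List.cons_ne_nil _ _) with hp
  obtain ⟨hadjz, ⟨β', hβ'col, hβ'freep⟩, hfan₂⟩ := hfanz
  have hββ' : β' = β := Option.some.inj (hβ'col.symm.trans hzcol)
  rw [hββ'] at hβ'freep
  -- adjacency of fan vertices to x
  have hAdjMem : ∀ w ∈ l₁ ++ z :: l₂, G.Adj x w := fanRest_mem_adj hfan
  have hpmem : p ∈ y₀ :: l₁ := List.getLast_mem _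
  have hadjp : G.Adj x p := by
    rcases List.mem_cons.1 hpmem with h | h
    · rw [h]; exact hadjxy
    · exact hAdjMem p (List.mem_append_left _ h)
  have hadjyk : G.Adj x yk := hAdjMem yk (List.mem_append_right _ hykmem)
  have hpyk : p ≠ yk := fun h => hdisj p hpmem yk hykmem h
  -- the swap along the Kempe component of x
  set c' := swap c α β x with hc'
  have hc'βx : ¬ Used c' x β := by
    rw [hc', used_swap_beta hαβ (SimpleGraph.Reachable.refl x)]
    exact hα
  have hnotboth : ¬ ((kg c α β).Reachable x p ∧ (kg c α β).Reachable x yk) := by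
    rintro ⟨h1, h2⟩
    exact no_three_leaves (kg_maxdeg_two c α β) hadjp.ne hadjyk.ne hpyk
      (kg_deg_one_left hα) (kg_deg_one_right hβ'freep) (kg_deg_one_right hβ) h1 h2
  -- colors on fan edges other than x z avoid α and β
  have hcolne : ∀ w, (w ∈ l₁ ∨ w ∈ l₂) → ∀ γ', c.col x w = some γ' →
      γ' ≠ α ∧ γ' ≠ β := by
    intro w hw γ' hcw
    constructor
    · rintro rfl; exact hα ⟨w, hcw⟩
    · rintro rfl
      have hwz : w = z := col_inj c hcw hzcol
      rcases hw with h | h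
      · exact hznl₁ (hwz ▸ h)
      · exact hznl₂ (hwz ▸ h)
  -- the prefix fan transfers to c'
  have hfan₁' : FanRest c' x y₀ l₁ := by
    refine fanRest_congr ?_ ?_ hfan₁
    · intro w hw
      obtain ⟨γ', hcw⟩ := fanRest_mem_col hfan w (List.mem_append_left _ hw)
      obtain ⟨h1, h2⟩ := hcolne w (Or.inl hw) γ' hcw
      rw [hcw, hc']
      exact (swap_col_some_iff_of_ne h1 h2).2 hcw
    · intro v _ w hw γ' hγ' hu
      obtain ⟨h1, h2⟩ := hcolne w (Or.inl hw) γ' hγ'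
      rw [hc'] at hu
      exact (used_swap_of_ne h1 h2).1 hu
  have hc'none : c'.col x y₀ = none := by rw [hc']; exact swap_none_iff.2 hnone
  by_cases hRp : (kg c α β).Reachable x p
  · -- case B : p is on the Kempe component of x; then yk is not, rotate the full fan
    have hRyk : ¬ (kg c α β).Reachable x yk := fun h => hnotboth ⟨hRp, h⟩
    have hβyk' : ¬ Used c' yk β := by
      rw [hc', used_swap_not_reach hRyk]; exact hβ
    have hmid : c'.col x z = some α := by
      rw [hc']
      exact (swap_col_alpha hαβ (SimpleGraph.Reachable.refl x)).2 hzcol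
    have hαp' : ¬ Used c' p α := by
      rw [hc', used_swap_alpha hαβ hRp]; exact hβ'freep
    have hfan₂' : FanRest c' x z l₂ := by
      refine fanRest_congr ?_ ?_ hfan₂
      · intro w hw
        obtain ⟨γ', hcw⟩ := fanRest_mem_col hfan w
          (List.mem_append_right _ (List.mem_cons_of_mem _ hw))
        obtain ⟨h1, h2⟩ := hcolne w (Or.inr hw) γ' hcw
        rw [hcw, hc']
        exact (swap_col_some_iff_of_ne h1 h2).2 hcw
      · intro v _ w hw γ' hγ' hu
        obtain ⟨h1, h2⟩ := hcolne w (Or.inr hw) γ' hγ'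
        rw [hc'] at hu
        exact (used_swap_of_ne h1 h2).1 hu
    have hfanfull : FanRest c' x y₀ (l₁ ++ z :: l₂) := by
      rw [fanRest_append l₁ (z :: l₂)]
      exact ⟨hfan₁', hadjz, ⟨α, hmid, hαp'⟩, hfan₂'⟩
    have hlastfree : ¬ Used c' ((y₀ :: (l₁ ++ z :: l₂)).getLast (List.cons_ne_nil _ _)) β := by
      rw [hyk2]; exact hβyk'
    obtain ⟨c'', hc''⟩ := rotate (l₁ ++ z :: l₂) c' y₀ hadjxy hc'none hnd hfanfull β
      hc'βx hlastfree
    refine ⟨c'', fun v w => ?_⟩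
    rw [hc'' v w, hc', swap_none_iff]
  · -- case A : p is not on the Kempe component of x; rotate the prefix fan
    have hβp' : ¬ Used c' p β := by
      rw [hc', used_swap_not_reach hRp]; exact hβ'freep
    obtain ⟨c'', hc''⟩ := rotate l₁ c' y₀ hadjxy hc'none hnd₁ hfan₁' β hc'βx hβp'
    refine ⟨c'', fun v w => ?_⟩
    rw [hc'' v w, hc', swap_none_iff]

end VE


open VE in
theorem extend_partial_vizing_coloring' {V : Type*} [Fintype V] [DecidableEq V]
    (G : SimpleGraph V) [DecidableRel G.Adj]
    (F : Set (Sym2 V)) (hF : F ⊆ G.edgeSet)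
    (φ : F → Fin (G.maxDegree + 1))
    (hφ : ∀ e f : F, e ≠ f →
      (∃ v : V, v ∈ (e : Sym2 V) ∧ v ∈ (f : Sym2 V)) → φ e ≠ φ f)
    (e : Sym2 V) (he : e ∈ G.edgeSet \ F) :
    ∃ ψ : (F ∪ {e} : Set (Sym2 V)) → Fin (G.maxDegree + 1),
      ∀ e' f' : (F ∪ {e} : Set (Sym2 V)), e' ≠ f' →
        (∃ v : V, v ∈ (e' : Sym2 V) ∧ v ∈ (f' : Sym2 V)) → ψ e' ≠ ψ f' := by
  classical
  -- the coloring function on Sym2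
  set colF : Sym2 V → Option (Fin (G.maxDegree + 1)) :=
    fun f => if h : f ∈ F then some (φ ⟨f, h⟩) else none with hcolF
  -- the initial partial coloring
  have hcolF_none : ∀ f, colF f = none ↔ f ∉ F := by
    intro f
    simp only [hcolF]
    by_cases h : f ∈ F
    · rw [dif_pos h]; simp [h]
    · rw [dif_neg h]; simp [h]
  set c₀ : PC G :=
    { col := fun v w => colF s(v, w)
      symm := fun v w => congrArg colF Sym2.eq_swap
      adj := by
        intro v w a h
        simp only [hcolF] at h
        by_cases hm : s(v, w) ∈ F
        · exact (SimpleGraph.mem_edgeSet G).1 (hF hm)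
        · rw [dif_neg hm] at h; exact nomatch h
      proper := by
        intro v w w' hne a h h'
        simp only [hcolF] at h h'
        by_cases hm : s(v, w) ∈ F
        · by_cases hm' : s(v, w') ∈ F
          · rw [dif_pos hm] at h
            rw [dif_pos hm'] at h'
            have hnee : (⟨s(v, w), hm⟩ : F) ≠ ⟨s(v, w'), hm'⟩ := by
              intro hh
              exact hne (Sym2.congr_right.1 (congrArg Subtype.val hh))
            have := hφ _ _ hnee ⟨v, Sym2.mem_mk_left _ _, Sym2.mem_mk_left _ _⟩
            rw [Option.some.inj h, Option.some.inj h'] at this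
            exact this rfl
          · rw [dif_neg hm'] at h'; exact nomatch h'
        · rw [dif_neg hm] at h; exact nomatch h } with hc₀
  -- decompose e
  obtain ⟨x, y₀, rfl⟩ : ∃ x y₀, e = s(x, y₀) := by
    induction e using Sym2.inductionOn with
    | hf x y => exact ⟨x, y, rfl⟩
  have hadjxy : G.Adj x y₀ := (SimpleGraph.mem_edgeSet G).1 he.1
  have hnone : c₀.col x y₀ = none := by
    rw [hc₀]
    exact (hcolF_none _).2 he.2
  obtain ⟨c', hc'⟩ := extend_one c₀ x y₀ hadjxy hnone
  -- the colored edges of c' include F ∪ {e}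
  have hdom : ∀ f : Sym2 V, f ∈ F ∪ {s(x, y₀)} → ∀ v w, f = s(v, w) →
      c'.col v w ≠ none := by
    rintro f hf v w rfl
    intro hcontra
    rw [hc' v w] at hcontra
    obtain ⟨h1, h2⟩ := hcontra
    rw [hc₀] at h1
    rcases hf with hf | hf
    · exact (hcolF_none s(v, w)).1 h1 hf
    · apply h2
      have := Sym2.eq_iff.1 hf
      rcases this with ⟨rfl, rfl⟩ | ⟨rfl, rfl⟩
      · exact Or.inl ⟨rfl, rfl⟩
      · exact Or.inr ⟨rfl, rfl⟩
  -- define ψ via Sym2.lift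
  set col2 : Sym2 V → Option (Fin (G.maxDegree + 1)) :=
    Sym2.lift ⟨c'.col, c'.symm⟩ with hcol2
  refine ⟨fun f => (col2 f.1).getD 0, ?_⟩
  rintro ⟨f₁, hf₁⟩ ⟨f₂, hf₂⟩ hne ⟨u, hu1, hu2⟩
  simp only at hu1 hu2 ⊢
  obtain ⟨w₁, rfl⟩ := Sym2.mem_iff_exists.1 hu1
  obtain ⟨w₂, rfl⟩ := Sym2.mem_iff_exists.1 hu2
  have hw : w₁ ≠ w₂ := by
    intro h
    subst h
    exact hne rfl
  obtain ⟨a₁, ha₁⟩ : ∃ a, c'.col u w₁ = some a := by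
    cases h : c'.col u w₁ with
    | none => exact absurd h (hdom _ hf₁ u w₁ rfl)
    | some a => exact ⟨a, rfl⟩
  obtain ⟨a₂, ha₂⟩ : ∃ a, c'.col u w₂ = some a := by
    cases h : c'.col u w₂ with
    | none => exact absurd h (hdom _ hf₂ u w₂ rfl)
    | some a => exact ⟨a, rfl⟩
  have hval₁ : col2 s(u, w₁) = some a₁ := by rw [hcol2, Sym2.lift_mk]; exact ha₁
  have hval₂ : col2 s(u, w₂) = some a₂ := by rw [hcol2, Sym2.lift_mk]; exact ha₂
  rw [hval₁, hval₂]
  simp only [Option.getD_some]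
  intro hh
  rw [hh] at ha₁
  exact c'.proper hw ha₁ ha₂

/-- Extending a partial Vizing coloring by one edge: if `F` is a subset of the
edges of a finite simple graph `G` with maximum degree `Δ`, `φ` is a proper
`(Δ+1)`-edge-coloring of `F`, and `e` is an edge of `G` not in `F`, then there
is a proper `(Δ+1)`-edge-coloring of `F ∪ {e}` (edges of `F` may be recolored). -/
theorem extend_partial_vizing_coloring {V : Type*} [Fintype V] [DecidableEq V]
    (G : SimpleGraph V) [DecidableRel G.Adj]
    (F : Set (Sym2 V)) (hF : F ⊆ G.edgeSet)
    (φ : F → Fin (G.maxDegree + 1))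
    (hφ : ∀ e f : F, e ≠ f →
      (∃ v : V, v ∈ (e : Sym2 V) ∧ v ∈ (f : Sym2 V)) → φ e ≠ φ f)
    (e : Sym2 V) (he : e ∈ G.edgeSet \ F) :
    ∃ ψ : (F ∪ {e} : Set (Sym2 V)) → Fin (G.maxDegree + 1),
      ∀ e' f' : (F ∪ {e} : Set (Sym2 V)), e' ≠ f' →
        (∃ v : V, v ∈ (e' : Sym2 V) ∧ v ∈ (f' : Sym2 V)) → ψ e' ≠ ψ f' :=
  extend_partial_vizing_coloring' G F hF φ hφ e he
end

section
/- Let n ≥ 2 and Δ be positive integers with Δ ≤ n, and let X₁, …, X_Δ be {0,1}-valued random variables on a common probability space such that for every i ∈ {1, …, Δ}, the conditional probability of the event {Xᵢ = 1} given X₁, …, X_{i−1} is almost surely at most 3/(Δ − i + 1). Then Pr( Σ_{i=1}^{Δ} Xᵢ ≥ 30 ln n ) ≤ 1/n³. -/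
open MeasureTheory Finset ENNReal

noncomputable section

namespace SHBB

variable {Ω : Type*} [MeasurableSpace Ω] (P : Measure Ω) {Δ : ℕ} (X : Fin Δ → Ω → ℕ)

def S (Δ k : ℕ) : Finset (Fin Δ) := Finset.univ.filter (fun j : Fin Δ => (j : ℕ) < k)

def A (X : Fin Δ → Ω → ℕ) (k : ℕ) (t : Finset (Fin Δ)) : Set Ω :=
  ⋂ j ∈ S Δ k, X j ⁻¹' {if j ∈ t then 1 else 0}

def v (Δ k : ℕ) (t : Finset (Fin Δ)) : ℝ≥0∞ :=
  ∏ j ∈ S Δ k, (1 + (if j ∈ t then 1 else 0 : ℝ≥0∞))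

def F (X : Fin Δ → Ω → ℕ) (k : ℕ) (ω : Ω) : ℝ≥0∞ :=
  ∏ j ∈ S Δ k, (1 + (X j ω : ℝ≥0∞))

lemma measurable_F (hmeas : ∀ i, Measurable (X i)) (k : ℕ) : Measurable (F X k) := by
  apply Finset.measurable_prod
  intro j _
  exact measurable_const.add ((measurable_from_top (f := fun m : ℕ => (m : ℝ≥0∞))).comp (hmeas j))

lemma measurableSet_A (hmeas : ∀ i, Measurable (X i)) (k : ℕ) (t : Finset (Fin Δ)) :
    MeasurableSet (A X k t) := by
  apply MeasurableSet.biInter (Set.to_countable _)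
  intro j _
  exact (hmeas j) (measurableSet_singleton _)

lemma mem_A_iff (hval : ∀ i, ∀ ω, X i ω ∈ ({0, 1} : Set ℕ)) (k : ℕ) (ω : Ω)
    (t : Finset (Fin Δ)) (ht : t ⊆ S Δ k) :
    ω ∈ A X k t ↔ t = (S Δ k).filter (fun j => X j ω = 1) := by
  have hXval : ∀ j, X j ω = 0 ∨ X j ω = 1 := fun j => by have := hval j ω; simpa using this
  constructor
  · intro hω
    ext j
    simp only [Finset.mem_filter]
    constructor
    · intro hj
      have hjS : j ∈ S Δ k := ht hj
      have hX : X j ω = if j ∈ t then 1 else 0 := by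
        have := Set.mem_iInter₂.1 hω j hjS; simpa using this
      exact ⟨hjS, by rw [hX, if_pos hj]⟩
    · rintro ⟨hjS, hj1⟩
      have hX : X j ω = if j ∈ t then 1 else 0 := by
        have := Set.mem_iInter₂.1 hω j hjS; simpa using this
      by_contra hj
      rw [if_neg hj] at hX
      rw [hX] at hj1; exact one_ne_zero hj1.symm
  · rintro rfl
    refine Set.mem_iInter₂.2 fun j hj => ?_
    simp only [Set.mem_preimage, Set.mem_singleton_iff, Finset.mem_filter]
    rcases hXval j with h0 | h1
    · rw [h0, if_neg (by simp [h0])]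
    · rw [h1, if_pos (by simp [hj, h1])]

lemma decomp (hmeas : ∀ i, Measurable (X i)) (hval : ∀ i, ∀ ω, X i ω ∈ ({0, 1} : Set ℕ))
    (k : ℕ) (g : Ω → ℝ≥0∞) (hg : Measurable g) :
    ∫⁻ ω, F X k ω * g ω ∂P
      = ∑ t ∈ (S Δ k).powerset, v Δ k t * ∫⁻ ω in A X k t, g ω ∂P := by
  have key : ∀ ω, F X k ω * g ω
      = ∑ t ∈ (S Δ k).powerset, (A X k t).indicator (fun _ => v Δ k t) ω * g ω := by
    intro ω
    have hXval : ∀ j, X j ω = 0 ∨ X j ω = 1 := fun j => by have := hval j ω; simpa using this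
    set t₀ : Finset (Fin Δ) := (S Δ k).filter (fun j => X j ω = 1) with ht₀
    have ht₀mem : t₀ ∈ (S Δ k).powerset := Finset.mem_powerset.2 (Finset.filter_subset _ _)
    rw [Finset.sum_eq_single_of_mem t₀ ht₀mem]
    · have hωA : ω ∈ A X k t₀ :=
        (mem_A_iff X hval k ω t₀ (Finset.filter_subset _ _)).2 rfl
      rw [Set.indicator_of_mem hωA]
      congr 1
      unfold F v
      apply Finset.prod_congr rfl
      intro j hj
      rcases hXval j with h0 | h1
      · rw [h0, if_neg (by simp [ht₀, h0])]; norm_num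
      · rw [h1, if_pos (by simp [ht₀, hj, h1])]; norm_num
    · intro t ht hne
      have : ω ∉ A X k t := by
        rw [mem_A_iff X hval k ω t (Finset.mem_powerset.1 ht)]
        exact hne
      rw [Set.indicator_of_notMem this, zero_mul]
  calc ∫⁻ ω, F X k ω * g ω ∂P
      = ∫⁻ ω, ∑ t ∈ (S Δ k).powerset, (A X k t).indicator (fun _ => v Δ k t) ω * g ω ∂P := by
        simp_rw [key]
    _ = ∑ t ∈ (S Δ k).powerset, ∫⁻ ω, (A X k t).indicator (fun _ => v Δ k t) ω * g ω ∂P := by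
        apply lintegral_finset_sum
        intro t _
        exact ((measurable_const.indicator (measurableSet_A X hmeas k t)).mul hg)
    _ = ∑ t ∈ (S Δ k).powerset, v Δ k t * ∫⁻ ω in A X k t, g ω ∂P := by
        apply Finset.sum_congr rfl
        intro t _
        have : ∀ ω, (A X k t).indicator (fun _ => v Δ k t) ω * g ω
            = (A X k t).indicator (fun ω => v Δ k t * g ω) ω := by
          intro ω
          by_cases h : ω ∈ A X k t
          · rw [Set.indicator_of_mem h, Set.indicator_of_mem h]
          · rw [Set.indicator_of_notMem h, Set.indicator_of_notMem h, zero_mul]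
        simp_rw [this]
        rw [lintegral_indicator (measurableSet_A X hmeas k t), lintegral_const_mul _ hg]

lemma S_succ (k : ℕ) (hk : k < Δ) :
    S Δ (k + 1) = insert (⟨k, hk⟩ : Fin Δ) (S Δ k) := by
  ext j
  simp only [S, Finset.mem_filter, Finset.mem_univ, true_and, Finset.mem_insert]
  constructor
  · intro h
    rcases Nat.lt_succ_iff_lt_or_eq.1 h with h' | h'
    · exact Or.inr h'
    · exact Or.inl (Fin.ext h')
  · rintro (rfl | h)
    · exact Nat.lt_succ_self k
    · exact Nat.lt_succ_of_lt h

lemma step (hmeas : ∀ i, Measurable (X i)) (hval : ∀ i, ∀ ω, X i ω ∈ ({0, 1} : Set ℕ))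
    (hcond : ∀ i : Fin Δ, ∀ B : Set Ω,
      MeasurableSet[⨆ j ∈ Finset.Iio i, MeasurableSpace.comap (X j) ⊤] B →
      P (B ∩ {ω | X i ω = 1}) ≤ ENNReal.ofReal (3 / ((Δ : ℝ) - i.val)) * P B)
    (k : ℕ) (hk : k < Δ) :
    ∫⁻ ω, F X (k + 1) ω ∂P
      ≤ (1 + ENNReal.ofReal (3 / ((Δ : ℝ) - k))) * ∫⁻ ω, F X k ω ∂P := by
  set i : Fin Δ := ⟨k, hk⟩ with hi
  set ind : Ω → ℝ≥0∞ := ({ω | X i ω = 1}).indicator 1 with hind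
  have hBmeas : MeasurableSet {ω | X i ω = 1} := (hmeas i) (measurableSet_singleton 1)
  have hindmeas : Measurable ind := measurable_one.indicator hBmeas
  have hcast : ∀ ω, (X i ω : ℝ≥0∞) = ind ω := by
    intro ω
    have := hval i ω
    rcases (by simpa using this : X i ω = 0 ∨ X i ω = 1) with h | h
    · rw [h, hind, Set.indicator_of_notMem (by simp [h])]; simp
    · rw [h, hind, Set.indicator_of_mem (by simp [h])]; simp
  have hsplit : ∀ ω, F X (k + 1) ω = F X k ω + F X k ω * ind ω := by
    intro ω
    rw [F, S_succ k hk, Finset.prod_insert (by simp [S]), ← hi, hcast ω]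
    show (1 + ind ω) * F X k ω = _
    ring
  -- atoms are measurable w.r.t. the history σ-algebra
  have hAhist : ∀ t : Finset (Fin Δ),
      MeasurableSet[⨆ j ∈ Finset.Iio i, MeasurableSpace.comap (X j) ⊤] (A X k t) := by
    intro t
    apply MeasurableSet.biInter (Set.to_countable _)
    intro j hj
    have hji : j ∈ Finset.Iio i := by
      simp only [Finset.mem_Iio]
      have : (j : ℕ) < k := (Finset.mem_filter.1 hj).2
      exact Fin.lt_def.2 this
    have hle : MeasurableSpace.comap (X j) ⊤
        ≤ ⨆ j ∈ Finset.Iio i, MeasurableSpace.comap (X j) ⊤ :=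
      le_iSup₂ (f := fun (j : Fin Δ) (_ : j ∈ Finset.Iio i) =>
        MeasurableSpace.comap (X j) ⊤) j hji
    exact hle _ ⟨_, trivial, rfl⟩
  have h1 : ∫⁻ ω, F X k ω * ind ω ∂P
      ≤ ENNReal.ofReal (3 / ((Δ : ℝ) - k)) * ∫⁻ ω, F X k ω ∂P := by
    rw [decomp P X hmeas hval k ind hindmeas]
    have hFk : ∫⁻ ω, F X k ω ∂P = ∑ t ∈ (S Δ k).powerset, v Δ k t * P (A X k t) := by
      have := decomp P X hmeas hval k (fun _ => 1) measurable_const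
      simpa using this
    rw [hFk, Finset.mul_sum]
    apply Finset.sum_le_sum
    intro t _
    have hA : ∫⁻ ω in A X k t, ind ω ∂P = P (A X k t ∩ {ω | X i ω = 1}) := by
      rw [hind, lintegral_indicator_one hBmeas, Measure.restrict_apply hBmeas,
        Set.inter_comm]
    rw [hA]
    calc v Δ k t * P (A X k t ∩ {ω | X i ω = 1})
        ≤ v Δ k t * (ENNReal.ofReal (3 / ((Δ : ℝ) - k)) * P (A X k t)) :=
          mul_le_mul_right (hcond i _ (hAhist t)) _
      _ = ENNReal.ofReal (3 / ((Δ : ℝ) - k)) * (v Δ k t * P (A X k t)) := by ring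
  calc ∫⁻ ω, F X (k + 1) ω ∂P
      = ∫⁻ ω, F X k ω + F X k ω * ind ω ∂P := by simp_rw [hsplit]
    _ = ∫⁻ ω, F X k ω ∂P + ∫⁻ ω, F X k ω * ind ω ∂P :=
        lintegral_add_left (measurable_F X hmeas k) _
    _ ≤ ∫⁻ ω, F X k ω ∂P + ENNReal.ofReal (3 / ((Δ : ℝ) - k)) * ∫⁻ ω, F X k ω ∂P :=
        add_le_add_right h1 _
    _ = (1 + ENNReal.ofReal (3 / ((Δ : ℝ) - k))) * ∫⁻ ω, F X k ω ∂P := by ring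

lemma bound [IsProbabilityMeasure P] (hmeas : ∀ i, Measurable (X i))
    (hval : ∀ i, ∀ ω, X i ω ∈ ({0, 1} : Set ℕ))
    (hcond : ∀ i : Fin Δ, ∀ B : Set Ω,
      MeasurableSet[⨆ j ∈ Finset.Iio i, MeasurableSpace.comap (X j) ⊤] B →
      P (B ∩ {ω | X i ω = 1}) ≤ ENNReal.ofReal (3 / ((Δ : ℝ) - i.val)) * P B) :
    ∀ k, k ≤ Δ → ∫⁻ ω, F X k ω ∂P
      ≤ ∏ m ∈ Finset.range k, (1 + ENNReal.ofReal (3 / ((Δ : ℝ) - m))) := by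
  intro k
  induction k with
  | zero =>
    intro _
    have : ∀ ω : Ω, F X 0 ω = 1 := by
      intro ω; unfold F S
      rw [Finset.filter_false_of_mem (by intro j _; omega), Finset.prod_empty]
    simp [this]
  | succ k ih =>
    intro hk1
    have hk : k < Δ := hk1
    calc ∫⁻ ω, F X (k + 1) ω ∂P
        ≤ (1 + ENNReal.ofReal (3 / ((Δ : ℝ) - k))) * ∫⁻ ω, F X k ω ∂P :=
          step P X hmeas hval hcond k hk
      _ ≤ (1 + ENNReal.ofReal (3 / ((Δ : ℝ) - k)))
            * ∏ m ∈ Finset.range k, (1 + ENNReal.ofReal (3 / ((Δ : ℝ) - m))) :=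
          mul_le_mul_right (ih (le_of_lt hk)) _
      _ = ∏ m ∈ Finset.range (k + 1), (1 + ENNReal.ofReal (3 / ((Δ : ℝ) - m))) := by
          rw [Finset.prod_range_succ, mul_comm]

lemma harmonic_sum_bound (n Δ : ℕ) (hΔ : 1 ≤ Δ) (hΔn : Δ ≤ n) :
    ∑ m ∈ Finset.range Δ, 3 / ((Δ : ℝ) - m) ≤ 3 * (1 + Real.log n) := by
  have hre : ∑ m ∈ Finset.range Δ, 3 / ((Δ : ℝ) - m)
      = ∑ j ∈ Finset.range Δ, 3 / ((j : ℝ) + 1) := by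
    rw [← Finset.sum_range_reflect]
    apply Finset.sum_congr rfl
    intro j hj
    have hj' : j < Δ := Finset.mem_range.1 hj
    congr 1
    have h1 : (Δ - 1 - j : ℕ) = Δ - (j + 1) := by omega
    rw [h1, Nat.cast_sub (by omega)]
    push_cast
    ring
  have hharm : ∑ j ∈ Finset.range Δ, 3 / ((j : ℝ) + 1) = 3 * (harmonic Δ : ℝ) := by
    rw [harmonic]
    push_cast
    rw [Finset.mul_sum]
    apply Finset.sum_congr rfl
    intro j _
    rw [div_eq_mul_inv]
  rw [hre, hharm]
  have h1 : (harmonic Δ : ℝ) ≤ 1 + Real.log Δ := harmonic_le_one_add_log Δ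
  have hΔ0 : (0 : ℝ) < Δ := by exact_mod_cast hΔ
  have h2 : Real.log Δ ≤ Real.log n := Real.log_le_log hΔ0 (by exact_mod_cast hΔn)
  linarith

lemma prod_real_bound (n Δ : ℕ) (hΔ : 1 ≤ Δ) (hΔn : Δ ≤ n) :
    ∏ m ∈ Finset.range Δ, (1 + ENNReal.ofReal (3 / ((Δ : ℝ) - m)))
      ≤ ENNReal.ofReal (Real.exp 3 * (n : ℝ) ^ 3) := by
  have hnn : ∀ m ∈ Finset.range Δ, (0 : ℝ) ≤ 3 / ((Δ : ℝ) - m) := by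
    intro m hm
    have h : (m : ℝ) < (Δ : ℝ) := by exact_mod_cast Finset.mem_range.1 hm
    have hd : (0 : ℝ) < (Δ : ℝ) - m := by linarith
    positivity
  have h1 : ∀ m ∈ Finset.range Δ,
      (1 : ℝ≥0∞) + ENNReal.ofReal (3 / ((Δ : ℝ) - m))
        = ENNReal.ofReal (1 + 3 / ((Δ : ℝ) - m)) := by
    intro m hm
    rw [ENNReal.ofReal_add zero_le_one (hnn m hm), ENNReal.ofReal_one]
  rw [Finset.prod_congr rfl h1,
    ← ENNReal.ofReal_prod_of_nonneg (fun m hm => by linarith [hnn m hm])]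
  apply ENNReal.ofReal_le_ofReal
  calc ∏ m ∈ Finset.range Δ, (1 + 3 / ((Δ : ℝ) - m))
      ≤ ∏ m ∈ Finset.range Δ, Real.exp (3 / ((Δ : ℝ) - m)) := by
        apply Finset.prod_le_prod
        · intro m hm; linarith [hnn m hm]
        · intro m hm
          have := Real.add_one_le_exp (3 / ((Δ : ℝ) - m))
          linarith
    _ = Real.exp (∑ m ∈ Finset.range Δ, 3 / ((Δ : ℝ) - m)) := (Real.exp_sum _ _).symm
    _ ≤ Real.exp (3 * (1 + Real.log n)) :=
        Real.exp_le_exp.2 (harmonic_sum_bound n Δ hΔ hΔn)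
    _ = Real.exp 3 * (n : ℝ) ^ 3 := by
        rw [show (3 : ℝ) * (1 + Real.log n) = 3 + (Real.log n + (Real.log n + Real.log n))
            by ring, Real.exp_add, Real.exp_add, Real.exp_add]
        have hn : (0 : ℝ) < n := by
          have : (1 : ℕ) ≤ n := le_trans hΔ hΔn
          exact_mod_cast Nat.lt_of_lt_of_le Nat.zero_lt_one this
        rw [Real.exp_log hn]
        ring

end SHBB

/-- Let `X₁, …, X_Δ` be `{0,1}`-valued random variables (possibly correlated)
such that for each `i`, the conditional probability of `{Xᵢ = 1}` given the
history `X₁, …, X_{i-1}` is almost surely at most `3/(Δ - i + 1)` (stated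
equivalently: `P(A ∩ {Xᵢ = 1}) ≤ 3/(Δ-i+1) · P(A)` for every event `A`
measurable with respect to the σ-algebra generated by `X₁, …, X_{i-1}`).
If `2 ≤ n` and `Δ ≤ n`, then `Pr(Σᵢ Xᵢ ≥ 30 ln n) ≤ 1/n³`.

Here `i : Fin Δ` corresponds to the `(i+1)`-st variable, so the bound
`3/(Δ - i + 1)` reads `3/(Δ - i.val)`. -/
theorem sum_of_history_bounded_bernoullis
    {Ω : Type*} [MeasurableSpace Ω] (P : Measure Ω) [IsProbabilityMeasure P]
    (n Δ : ℕ) (hn : 2 ≤ n) (hΔ : 1 ≤ Δ) (hΔn : Δ ≤ n)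
    (X : Fin Δ → Ω → ℕ) (hmeas : ∀ i, Measurable (X i))
    (hval : ∀ i, ∀ ω, X i ω ∈ ({0, 1} : Set ℕ))
    (hcond : ∀ i : Fin Δ, ∀ A : Set Ω,
      MeasurableSet[⨆ j ∈ Finset.Iio i, MeasurableSpace.comap (X j) ⊤] A →
      P (A ∩ {ω | X i ω = 1}) ≤ ENNReal.ofReal (3 / ((Δ : ℝ) - i.val)) * P A) :
    (P {ω | 30 * Real.log n ≤ ∑ i, (X i ω : ℝ)}).toReal ≤ 1 / (n : ℝ) ^ 3 := by
  classical
  have hn1 : (1 : ℕ) ≤ n := le_trans one_le_two hn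
  have hnpos : (0 : ℝ) < n := by exact_mod_cast Nat.lt_of_lt_of_le Nat.zero_lt_two hn
  have hn2 : (2 : ℝ) ≤ n := by exact_mod_cast hn
  set E : Set Ω := {ω | 30 * Real.log n ≤ ∑ i, (X i ω : ℝ)} with hE
  have hEmeas : MeasurableSet E := by
    apply measurableSet_le measurable_const
    apply Finset.measurable_sum
    intro i _
    exact measurable_from_top.comp (hmeas i)
  have hSfull : SHBB.S Δ Δ = Finset.univ := by
    ext j; simp [SHBB.S, j.isLt]
  have hFΔ : ∀ ω, SHBB.F X Δ ω = ((2 ^ (∑ i, X i ω) : ℕ) : ℝ≥0∞) := by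
    intro ω
    rw [SHBB.F, hSfull, ← Finset.prod_pow_eq_pow_sum]
    push_cast
    apply Finset.prod_congr rfl
    intro j _
    rcases (by simpa using hval j ω : X j ω = 0 ∨ X j ω = 1) with h | h <;>
      rw [h] <;> norm_num
  set c : ℝ≥0∞ := ENNReal.ofReal ((n : ℝ) ^ ((30 : ℝ) * Real.log 2)) with hc
  have hlog2 : (0.6931471803 : ℝ) < Real.log 2 := Real.log_two_gt_d9
  have hcle : ∀ ω ∈ E, c ≤ SHBB.F X Δ ω := by
    intro ω hω
    rw [hFΔ ω]
    have hcast2 : ((2 ^ (∑ i, X i ω) : ℕ) : ℝ≥0∞)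
        = ENNReal.ofReal ((2 : ℝ) ^ (∑ i, X i ω)) := by
      rw [← ENNReal.ofReal_natCast]
      push_cast
      rfl
    rw [hcast2, hc]
    apply ENNReal.ofReal_le_ofReal
    have hs : (30 : ℝ) * Real.log n ≤ ((∑ i, X i ω : ℕ) : ℝ) := by
      push_cast
      exact hω
    have hlogn : 0 ≤ Real.log n := Real.log_nonneg (by exact_mod_cast hn1)
    calc (n : ℝ) ^ ((30 : ℝ) * Real.log 2)
        = Real.exp (Real.log n * ((30 : ℝ) * Real.log 2)) := Real.rpow_def_of_pos hnpos _
      _ ≤ Real.exp (Real.log 2 * ((∑ i, X i ω : ℕ) : ℝ)) := by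
          apply Real.exp_le_exp.2
          nlinarith [hlog2, hs, hlogn]
      _ = (2 : ℝ) ^ (((∑ i, X i ω : ℕ) : ℝ)) := (Real.rpow_def_of_pos two_pos _).symm
      _ = (2 : ℝ) ^ (∑ i, X i ω) := Real.rpow_natCast 2 _
  have hmarkov : c * P E ≤ ∫⁻ ω, SHBB.F X Δ ω ∂P := by
    have heq : c * P E = ∫⁻ ω, E.indicator (fun _ => c) ω ∂P := by
      rw [lintegral_indicator hEmeas, setLIntegral_const, mul_comm]
    rw [heq]
    apply lintegral_mono
    intro ω
    by_cases h : ω ∈ E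
    · rw [Set.indicator_of_mem h]; exact hcle ω h
    · rw [Set.indicator_of_notMem h]; exact zero_le
  have hint : ∫⁻ ω, SHBB.F X Δ ω ∂P ≤ ENNReal.ofReal (Real.exp 3 * (n : ℝ) ^ 3) :=
    le_trans (SHBB.bound P X hmeas hval hcond Δ le_rfl) (SHBB.prod_real_bound n Δ hΔ hΔn)
  have hcP : c * P E ≤ ENNReal.ofReal (Real.exp 3 * (n : ℝ) ^ 3) := hmarkov.trans hint
  have e1 : (n : ℝ) ^ ((30 : ℝ) * Real.log 2)
      = (n : ℝ) ^ ((30 : ℝ) * Real.log 2 - 6) * (n : ℝ) ^ (6 : ℕ) := by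
    rw [← Real.rpow_natCast (n : ℝ) 6, ← Real.rpow_add hnpos]
    norm_num
  have h14 : (14 : ℝ) ≤ 30 * Real.log 2 - 6 := by nlinarith [hlog2]
  have e2 : Real.exp 3 ≤ (n : ℝ) ^ ((30 : ℝ) * Real.log 2 - 6) := by
    calc Real.exp 3 = (Real.exp 1) ^ (3 : ℕ) := by
          rw [← Real.exp_nat_mul]; norm_num
      _ ≤ (2.7182818286 : ℝ) ^ (3 : ℕ) :=
          pow_le_pow_left₀ (Real.exp_pos 1).le Real.exp_one_lt_d9.le 3
      _ ≤ (2 : ℝ) ^ (14 : ℕ) := by norm_num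
      _ = (2 : ℝ) ^ ((14 : ℕ) : ℝ) := (Real.rpow_natCast 2 14).symm
      _ ≤ (2 : ℝ) ^ ((30 : ℝ) * Real.log 2 - 6) :=
          Real.rpow_le_rpow_of_exponent_le one_le_two (by exact_mod_cast h14)
      _ ≤ (n : ℝ) ^ ((30 : ℝ) * Real.log 2 - 6) :=
          Real.rpow_le_rpow (by norm_num) hn2 (by linarith)
  have hkey : Real.exp 3 * (n : ℝ) ^ 3
      ≤ (n : ℝ) ^ ((30 : ℝ) * Real.log 2) * (1 / (n : ℝ) ^ 3) := by
    rw [e1]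
    have h6 : (n : ℝ) ^ (6 : ℕ) * (1 / (n : ℝ) ^ 3) = (n : ℝ) ^ 3 := by
      field_simp
    rw [mul_assoc, h6]
    exact mul_le_mul_of_nonneg_right e2 (by positivity)
  have hofkey : ENNReal.ofReal (Real.exp 3 * (n : ℝ) ^ 3)
      ≤ c * ENNReal.ofReal (1 / (n : ℝ) ^ 3) := by
    rw [hc, ← ENNReal.ofReal_mul (by positivity)]
    exact ENNReal.ofReal_le_ofReal hkey
  have hc0 : c ≠ 0 := by
    rw [hc]
    exact (ENNReal.ofReal_pos.2 (Real.rpow_pos_of_pos hnpos _)).ne'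
  have hPE : P E ≤ ENNReal.ofReal (1 / (n : ℝ) ^ 3) :=
    (ENNReal.mul_le_mul_iff_right hc0 ENNReal.ofReal_ne_top).1 (hcP.trans hofkey)
  exact ENNReal.toReal_le_of_le_ofReal (by positivity) hPE
end
end

section
/- Let n and Δ be positive integers with n ≤ Δ, let μ, p ∈ [0, 1], let X₁, …, Xₙ be {0,1}-valued random variables (possibly correlated) with Pr(X_u = 1) ≤ μ for every u ∈ [n], and let Z₁, …, Zₙ be mutually independent Bernoulli(p) random variables that are independent of the tuple (X₁, …, Xₙ). Then for every integer y ≥ 1, Pr( Σ_{u=1}^{n} X_u · Z_u ≥ y ) ≤ C(n, y) · μ · p^y, where C(n, y) denotes the binomial coefficient n choose y. -/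
open MeasureTheory ProbabilityTheory

/-- Let `X₁, …, Xₙ` be `{0,1}`-valued random variables (possibly correlated)
with `Pr(X_u = 1) ≤ μ` for each `u`, and let `Z₁, …, Zₙ` be mutually independent
Bernoulli(`p`) random variables, independent of the tuple `(X₁, …, Xₙ)`.
Then for every integer `y ≥ 1`, `Pr(Σᵤ Xᵤ·Zᵤ ≥ y) ≤ (n choose y) · μ · p^y`. -/
theorem prob_sum_mul_indep_bernoulli_ge
    {Ω : Type*} [MeasurableSpace Ω] (P : Measure Ω) [IsProbabilityMeasure P]
    (n Δ : ℕ) (hn : 1 ≤ n) (hΔ : 1 ≤ Δ) (hnΔ : n ≤ Δ)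
    (μ p : ℝ) (hμ : μ ∈ Set.Icc (0 : ℝ) 1) (hp : p ∈ Set.Icc (0 : ℝ) 1)
    (X Z : Fin n → Ω → ℕ)
    (hXmeas : ∀ u, Measurable (X u)) (hZmeas : ∀ u, Measurable (Z u))
    (hXval : ∀ u, ∀ ω, X u ω ∈ ({0, 1} : Set ℕ))
    (hZval : ∀ u, ∀ ω, Z u ω ∈ ({0, 1} : Set ℕ))
    (hXμ : ∀ u, (P {ω | X u ω = 1}).toReal ≤ μ)
    (hZp : ∀ u, (P {ω | Z u ω = 1}).toReal = p)
    (hZindep : iIndepFun Z P)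
    (hZX : IndepFun (fun ω => (fun u => X u ω)) (fun ω => (fun u => Z u ω)) P)
    (y : ℕ) (hy : 1 ≤ y) :
    (P {ω | (y : ℝ) ≤ ∑ u, (X u ω : ℝ) * (Z u ω : ℝ)}).toReal ≤
      (n.choose y : ℝ) * μ * p ^ y := by
  classical
  set A : Finset (Fin n) → Set Ω :=
    fun S => ⋂ u ∈ S, ({ω | X u ω = 1} ∩ {ω | Z u ω = 1}) with hA
  -- Step 1: inclusion into union over y-subsets
  have hsub : {ω | (y : ℝ) ≤ ∑ u, (X u ω : ℝ) * (Z u ω : ℝ)} ⊆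
      ⋃ S ∈ Finset.univ.powersetCard y, A S := by
    intro ω hω
    simp only [Set.mem_setOf_eq] at hω
    set T := Finset.univ.filter (fun u => X u ω = 1 ∧ Z u ω = 1) with hT
    have hsum : ∑ u, (X u ω : ℝ) * (Z u ω : ℝ) = T.card := by
      rw [hT, Finset.card_filter]
      push_cast
      refine Finset.sum_congr rfl fun u _ => ?_
      rcases (by simpa using hXval u ω : X u ω = 0 ∨ X u ω = 1) with h | h <;>
        rcases (by simpa using hZval u ω : Z u ω = 0 ∨ Z u ω = 1) with h' | h' <;>
          simp [h, h']
    have hyT : y ≤ T.card := by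
      rw [hsum] at hω; exact_mod_cast hω
    obtain ⟨S, hST, hScard⟩ := Finset.exists_subset_card_eq hyT
    refine Set.mem_biUnion (Finset.mem_powersetCard.2 ⟨Finset.subset_univ S, hScard⟩) ?_
    simp only [hA, Set.mem_iInter]
    intro u hu
    have hm := hST hu
    rw [hT, Finset.mem_filter] at hm
    exact ⟨hm.2.1, hm.2.2⟩
  -- Step 2: bound each A S
  have hAS : ∀ S ∈ Finset.univ.powersetCard y, (P (A S)).toReal ≤ μ * p ^ y := by
    intro S hS
    have hScard : S.card = y := (Finset.mem_powersetCard.1 hS).2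
    have hSne : S.Nonempty := Finset.card_pos.1 (by omega)
    obtain ⟨u₀, hu₀⟩ := hSne
    set sX : Set (Fin n → ℕ) := {f | f u₀ = 1} with hsX
    set sZ : Set (Fin n → ℕ) := ⋂ u ∈ S, {f | f u = 1} with hsZ
    have hsXm : MeasurableSet sX := (measurable_pi_apply u₀) (measurableSet_singleton 1)
    have hsZm : MeasurableSet sZ :=
      MeasurableSet.biInter (Finset.countable_toSet S)
        (fun u _ => (measurable_pi_apply u) (measurableSet_singleton 1))
    have hsub2 : A S ⊆ (fun ω => (fun u => X u ω)) ⁻¹' sX ∩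
        (fun ω => (fun u => Z u ω)) ⁻¹' sZ := by
      intro ω hω
      simp only [hA, Set.mem_iInter, Set.mem_inter_iff, Set.mem_setOf_eq] at hω
      refine ⟨(hω u₀ hu₀).1, ?_⟩
      simp only [Set.mem_preimage, hsZ, Set.mem_iInter, Set.mem_setOf_eq]
      exact fun u hu => (hω u hu).2
    have hmul := hZX.measure_inter_preimage_eq_mul sX sZ hsXm hsZm
    have hZprod : P ((fun ω => (fun u => Z u ω)) ⁻¹' sZ) = ∏ u ∈ S, P {ω | Z u ω = 1} := by
      have : (fun ω => (fun u => Z u ω)) ⁻¹' sZ = ⋂ u ∈ S, {ω | Z u ω = 1} := by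
        ext ω
        simp [hsZ]
      rw [this]
      exact hZindep.meas_biInter (fun u _ =>
        ⟨{1}, measurableSet_singleton 1, rfl⟩)
    have hfin : ∀ s : Set Ω, P s ≠ ⊤ := fun s => measure_ne_top P s
    calc (P (A S)).toReal ≤ (P ((fun ω => (fun u => X u ω)) ⁻¹' sX ∩
          (fun ω => (fun u => Z u ω)) ⁻¹' sZ)).toReal := by
          exact ENNReal.toReal_mono (hfin _) (measure_mono hsub2)
      _ = (P ((fun ω => (fun u => X u ω)) ⁻¹' sX)).toReal *
          (P ((fun ω => (fun u => Z u ω)) ⁻¹' sZ)).toReal := by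
          rw [hmul, ENNReal.toReal_mul]
      _ ≤ μ * p ^ y := by
          have h1 : (P ((fun ω => (fun u => X u ω)) ⁻¹' sX)).toReal ≤ μ := by
            have : (fun ω => (fun u => X u ω)) ⁻¹' sX = {ω | X u₀ ω = 1} := by
              ext ω; simp [hsX]
            rw [this]; exact hXμ u₀
          have h2 : (P ((fun ω => (fun u => Z u ω)) ⁻¹' sZ)).toReal = p ^ y := by
            rw [hZprod, ENNReal.toReal_prod]
            rw [Finset.prod_congr rfl (fun u _ => hZp u), Finset.prod_const, hScard]
          rw [h2]
          exact mul_le_mul_of_nonneg_right h1 (pow_nonneg hp.1 y)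
  -- Step 3: union bound
  have hunion : (P {ω | (y : ℝ) ≤ ∑ u, (X u ω : ℝ) * (Z u ω : ℝ)}).toReal ≤
      ∑ S ∈ Finset.univ.powersetCard y, (P (A S)).toReal := by
    refine le_trans (ENNReal.toReal_mono ?_ ((measure_mono hsub).trans
      (measure_biUnion_finset_le _ _))) ?_
    · exact (ENNReal.sum_ne_top).2 fun S _ => measure_ne_top P _
    · rw [ENNReal.toReal_sum (fun S _ => measure_ne_top P _)]
  refine hunion.trans ?_
  calc ∑ S ∈ Finset.univ.powersetCard y, (P (A S)).toReal
      ≤ ∑ S ∈ Finset.univ.powersetCard y, μ * p ^ y := Finset.sum_le_sum hAS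
    _ = (n.choose y : ℝ) * μ * p ^ y := by
        rw [Finset.sum_const, Finset.card_powersetCard, Finset.card_univ,
          Fintype.card_fin, nsmul_eq_mul, mul_assoc]
end

section
/- Let Δ and n be integers with 3 ≤ n and 1 ≤ Δ ≤ n, and for i ∈ {1, …, Δ} set μᵢ := 3/(Δ − i + 1). Let Y₁, …, Y_Δ be mutually independent non-negative integer-valued random variables such that for every i: E[Yᵢ] ≤ μᵢ, and for every integer y ≥ 1, Pr(Yᵢ ≥ y) ≤ 15 · e^{−y} · μᵢ. Then Pr( Σ_{i=1}^{Δ} Yᵢ ≥ 540 ln n ) ≤ n^{−30}. -/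
open MeasureTheory ProbabilityTheory

lemma exp_half_layer (B w : ℕ) (hw : w ≤ B) :
    Real.exp ((w : ℝ) / 2) =
      1 + ∑ y ∈ Finset.range B,
        (Real.exp (((y : ℝ) + 1) / 2) - Real.exp ((y : ℝ) / 2)) *
          (if y + 1 ≤ w then (1 : ℝ) else 0) := by
  have key : ∑ y ∈ Finset.range B,
      (Real.exp (((y : ℝ) + 1) / 2) - Real.exp ((y : ℝ) / 2)) *
        (if y + 1 ≤ w then (1 : ℝ) else 0) = Real.exp ((w : ℝ) / 2) - 1 := by
    rw [Finset.range_eq_Ico, ← Finset.sum_Ico_consecutive _ (Nat.zero_le w) hw]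
    have h2 : ∑ y ∈ Finset.Ico w B,
        (Real.exp (((y : ℝ) + 1) / 2) - Real.exp ((y : ℝ) / 2)) *
          (if y + 1 ≤ w then (1 : ℝ) else 0) = 0 := by
      refine Finset.sum_eq_zero fun y hy => ?_
      rw [if_neg (by simp at hy; omega), mul_zero]
    have h1 : ∑ y ∈ Finset.Ico 0 w,
        (Real.exp (((y : ℝ) + 1) / 2) - Real.exp ((y : ℝ) / 2)) *
          (if y + 1 ≤ w then (1 : ℝ) else 0)
        = ∑ y ∈ Finset.range w,
          ((fun m : ℕ => Real.exp ((m : ℝ) / 2)) (y + 1)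
            - (fun m : ℕ => Real.exp ((m : ℝ) / 2)) y) := by
      rw [← Finset.range_eq_Ico]
      refine Finset.sum_congr rfl fun y hy => ?_
      rw [if_pos (by have := Finset.mem_range.mp hy; omega), mul_one]
      push_cast
      ring_nf
    rw [h1, h2, add_zero, Finset.sum_range_sub (fun m : ℕ => Real.exp ((m : ℝ) / 2))]
    simp
  linarith

lemma integral_exp_half_le {Ω : Type*} [MeasurableSpace Ω] (P : Measure Ω)
    [IsProbabilityMeasure P] (B : ℕ) (W : Ω → ℕ) (hW : Measurable W)
    (hWB : ∀ ω, W ω ≤ B) {c : ℝ} (hc : 0 ≤ c)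
    (htail : ∀ y : ℕ, 1 ≤ y → (P {ω | y ≤ W ω}).toReal ≤ c * Real.exp (-(y : ℝ))) :
    (∫ ω, Real.exp ((W ω : ℝ) / 2) ∂P) ≤ 1 + c := by
  set g : ℕ → ℝ := fun y => Real.exp (((y : ℝ) + 1) / 2) - Real.exp ((y : ℝ) / 2) with hg
  have hgnn : ∀ y, 0 ≤ g y := fun y =>
    sub_nonneg.mpr (Real.exp_le_exp.mpr (by linarith))
  have hSet : ∀ y : ℕ, MeasurableSet {ω | y ≤ W ω} := fun y => hW measurableSet_Ici
  have hint : ∀ y : ℕ,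
      Integrable (fun ω => ({ω | y + 1 ≤ W ω}).indicator (fun _ => g y) ω) P :=
    fun y => (integrable_const (g y)).indicator (hSet (y + 1))
  have heq : (fun ω => Real.exp ((W ω : ℝ) / 2)) =
      fun ω => 1 + ∑ y ∈ Finset.range B,
        ({ω | y + 1 ≤ W ω}).indicator (fun _ => g y) ω := by
    funext ω
    rw [exp_half_layer B (W ω) (hWB ω)]
    congr 1
    refine Finset.sum_congr rfl fun y _ => ?_
    by_cases h : y + 1 ≤ W ω
    · rw [if_pos h, mul_one, Set.indicator_of_mem (show ω ∈ {ω | y + 1 ≤ W ω} from h)]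
    · rw [if_neg h, mul_zero, Set.indicator_of_notMem (show ω ∉ {ω | y + 1 ≤ W ω} from h)]
  rw [heq, integral_add (integrable_const 1)
      (integrable_finset_sum _ fun y _ => hint y),
    integral_const, integral_finset_sum _ fun y _ => hint y]
  simp only [Measure.real, measure_univ, ENNReal.toReal_one, smul_eq_mul, one_mul]
  have hindval : ∀ y : ℕ, (∫ ω, ({ω | y + 1 ≤ W ω}).indicator (fun _ => g y) ω ∂P)
      = (P {ω | y + 1 ≤ W ω}).toReal * g y := by
    intro y
    rw [integral_indicator_const _ (hSet (y + 1)), smul_eq_mul]; rfl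
  have hbound : ∑ y ∈ Finset.range B, (P {ω | y + 1 ≤ W ω}).toReal * g y ≤ c := by
    set r : ℝ := Real.exp (-(1 : ℝ) / 2) with hr
    have step : ∀ y ∈ Finset.range B,
        (P {ω | y + 1 ≤ W ω}).toReal * g y ≤ c * (r ^ y - r ^ (y + 1)) := by
      intro y _
      have h1 : (P {ω | y + 1 ≤ W ω}).toReal ≤ c * Real.exp (-((y : ℝ) + 1)) := by
        have := htail (y + 1) (by omega)
        push_cast at this
        convert this using 3
      have h2 : (P {ω | y + 1 ≤ W ω}).toReal * g y
          ≤ (c * Real.exp (-((y : ℝ) + 1))) * g y :=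
        mul_le_mul_of_nonneg_right h1 (hgnn y)
      refine h2.trans ?_
      -- now pure exp arithmetic
      have hs : r * r = Real.exp (-1 : ℝ) := by
        rw [hr, ← Real.exp_add]; norm_num
      have e1 : Real.exp (-((y : ℝ) + 1)) * g y
          = Real.exp (-(y : ℝ) / 2) * (r - r * r) := by
        rw [hg, hs, hr]
        simp only [mul_sub, ← Real.exp_add]
        ring_nf
      have e2 : r ^ y - r ^ (y + 1) = Real.exp (-(y : ℝ) / 2) * (1 - r) := by
        have hry : r ^ y = Real.exp (-(y : ℝ) / 2) := by
          rw [hr, ← Real.exp_nat_mul]; ring_nf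
        rw [pow_succ, hry, mul_sub, mul_one]
      have htpos : (0 : ℝ) < Real.exp (-(y : ℝ) / 2) := Real.exp_pos _
      have hkey : r - r * r ≤ 1 - r := by nlinarith [sq_nonneg (r - 1)]
      calc c * Real.exp (-((y : ℝ) + 1)) * g y
          = c * (Real.exp (-(y : ℝ) / 2) * (r - r * r)) := by rw [mul_assoc, e1]
        _ ≤ c * (Real.exp (-(y : ℝ) / 2) * (1 - r)) := by
            apply mul_le_mul_of_nonneg_left _ hc
            exact mul_le_mul_of_nonneg_left hkey htpos.le
        _ = c * (r ^ y - r ^ (y + 1)) := by rw [e2]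
    calc ∑ y ∈ Finset.range B, (P {ω | y + 1 ≤ W ω}).toReal * g y
        ≤ ∑ y ∈ Finset.range B, c * (r ^ y - r ^ (y + 1)) := Finset.sum_le_sum step
      _ = c * (r ^ 0 - r ^ B) := by
          rw [← Finset.mul_sum, Finset.sum_range_sub' (fun y => r ^ y)]
      _ ≤ c * 1 := by
          apply mul_le_mul_of_nonneg_left _ hc
          simp only [pow_zero]
          have : 0 ≤ r ^ B := pow_nonneg (Real.exp_pos _).le B
          linarith
      _ = c := mul_one c
  calc (1 : ℝ) + ∑ y ∈ Finset.range B,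
        ∫ ω, ({ω | y + 1 ≤ W ω}).indicator (fun _ => g y) ω ∂P
      = 1 + ∑ y ∈ Finset.range B, (P {ω | y + 1 ≤ W ω}).toReal * g y := by
        congr 1; exact Finset.sum_congr rfl fun y _ => hindval y
    _ ≤ 1 + c := by linarith

lemma sum_mu_le (Δ : ℕ) :
    ∑ i : Fin Δ, 3 / ((Δ : ℝ) - (i.val : ℝ)) ≤ 3 * (1 + Real.log Δ) := by
  have h1 : ∑ i : Fin Δ, 3 / ((Δ : ℝ) - (i.val : ℝ))
      = ∑ j ∈ Finset.range Δ, 3 / (((Δ - j : ℕ) : ℝ)) := by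
    rw [← Fin.sum_univ_eq_sum_range (fun j => 3 / (((Δ - j : ℕ) : ℝ)))]
    refine Finset.sum_congr rfl fun j _ => ?_
    rw [Nat.cast_sub (le_of_lt j.isLt)]
  have h2 : ∑ j ∈ Finset.range Δ, 3 / (((Δ - j : ℕ) : ℝ))
      = ∑ j ∈ Finset.range Δ, 3 / ((j : ℝ) + 1) := by
    rw [← Finset.sum_range_reflect (fun j => 3 / ((j : ℝ) + 1)) Δ]
    refine Finset.sum_congr rfl fun j hj => ?_
    have hj' : j < Δ := Finset.mem_range.mp hj
    have : Δ - 1 - j + 1 = Δ - j := by omega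
    rw [← this]
    push_cast
    ring_nf
  have h3 : ∑ j ∈ Finset.range Δ, 3 / ((j : ℝ) + 1) = 3 * ((harmonic Δ : ℚ) : ℝ) := by
    rw [harmonic]
    push_cast
    rw [Finset.mul_sum]
    refine Finset.sum_congr rfl fun j hj => ?_
    rw [div_eq_mul_inv]
  rw [h1, h2, h3]
  have := harmonic_le_one_add_log Δ
  linarith

set_option maxHeartbeats 1000000 in
/-- Let `3 ≤ n`, `1 ≤ Δ ≤ n` and, for `i ∈ {1, …, Δ}`, set `μᵢ := 3/(Δ - i + 1)`.
If `Y₁, …, Y_Δ` are mutually independent non-negative integer-valued random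
variables with `E[Yᵢ] ≤ μᵢ` and `Pr(Yᵢ ≥ y) ≤ 15·e^{-y}·μᵢ` for every integer
`y ≥ 1`, then `Pr(Σᵢ Yᵢ ≥ 540 ln n) ≤ n^{-30}`.

Here `i : Fin Δ` corresponds to the `(i+1)`-st variable, so `μᵢ` reads
`3/(Δ - i.val)`. -/
theorem sum_indep_exp_tail_vars_le
    {Ω : Type*} [MeasurableSpace Ω] (P : Measure Ω) [IsProbabilityMeasure P]
    (n Δ : ℕ) (hn : 3 ≤ n) (hΔ : 1 ≤ Δ) (hΔn : Δ ≤ n)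
    (Y : Fin Δ → Ω → ℕ) (hmeas : ∀ i, Measurable (Y i))
    (hindep : iIndepFun Y P)
    (hE : ∀ i : Fin Δ, (∫ ω, (Y i ω : ℝ) ∂P) ≤ 3 / ((Δ : ℝ) - i.val))
    (htail : ∀ i : Fin Δ, ∀ y : ℕ, 1 ≤ y →
      (P {ω | y ≤ Y i ω}).toReal ≤ 15 * Real.exp (-(y : ℝ)) * (3 / ((Δ : ℝ) - i.val))) :
    (P {ω | 540 * Real.log n ≤ ∑ i, (Y i ω : ℝ)}).toReal ≤ (n : ℝ) ^ (-(30 : ℝ)) := by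
  classical
  set B : ℕ := 40 * n with hB
  set μf : Fin Δ → ℝ := fun i => 3 / ((Δ : ℝ) - i.val) with hμf
  have hμpos : ∀ i, 0 < μf i := by
    intro i
    have : (i.val : ℝ) + 1 ≤ (Δ : ℝ) := by exact_mod_cast i.isLt
    exact div_pos (by norm_num) (by linarith)
  set X : Fin Δ → Ω → ℝ := fun i ω => ((min (Y i ω) B : ℕ) : ℝ) with hX
  have hg : Measurable (fun m : ℕ => ((min m B : ℕ) : ℝ)) :=
    measurable_of_countable _
  have hXmeas : ∀ i, Measurable (X i) := fun i => hg.comp (hmeas i)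
  have hXindep : iIndepFun X P :=
    hindep.comp (fun _ m => ((min m B : ℕ) : ℝ)) (fun _ => hg)
  have hXle : ∀ i ω, X i ω ≤ (B : ℝ) := fun i ω => by
    exact_mod_cast Nat.cast_le.mpr (min_le_right _ _)
  set SX : Ω → ℝ := fun ω => ∑ i, X i ω with hSX
  set L : ℝ := Real.log n with hL
  -- basic facts about L and n
  have hnpos : (0 : ℝ) < n := by positivity
  have hn3 : (3 : ℝ) ≤ n := by exact_mod_cast hn
  have hL1 : 1 ≤ L := by
    rw [hL, Real.le_log_iff_exp_le (by linarith)]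
    calc Real.exp 1 ≤ 2.7182818286 := le_of_lt Real.exp_one_lt_d9
      _ ≤ n := by linarith
  have hLn : L ≤ (n : ℝ) - 1 := Real.log_le_sub_one_of_pos hnpos
  have hrpow : (n : ℝ) ^ (-(30 : ℝ)) = Real.exp (-30 * L) := by
    rw [Real.rpow_def_of_pos hnpos, hL]; ring_nf
  -- event inclusion
  have hincl : {ω | 540 * Real.log n ≤ ∑ i, (Y i ω : ℝ)} ⊆
      {ω | 540 * Real.log n ≤ SX ω} ∪ ⋃ i, {ω | B + 1 ≤ Y i ω} := by
    intro ω hω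
    by_cases h : ∀ i, Y i ω ≤ B
    · left
      have hXY : ∀ i, X i ω = (Y i ω : ℝ) := fun i => by
        rw [hX]; simp only; rw [min_eq_left (h i)]
      simp only [Set.mem_setOf_eq, hSX]
      calc 540 * Real.log n ≤ ∑ i, (Y i ω : ℝ) := hω
        _ = ∑ i, X i ω := Finset.sum_congr rfl fun i _ => (hXY i).symm
    · right
      push_neg at h
      obtain ⟨i, hi⟩ := h
      exact Set.mem_iUnion.mpr ⟨i, by simp only [Set.mem_setOf_eq]; omega⟩
  -- split probability
  have hsplit : (P {ω | 540 * Real.log n ≤ ∑ i, (Y i ω : ℝ)}).toReal ≤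
      (P {ω | 540 * Real.log n ≤ SX ω}).toReal
        + ∑ i, (P {ω | B + 1 ≤ Y i ω}).toReal := by
    have h1 : P {ω | 540 * Real.log n ≤ ∑ i, (Y i ω : ℝ)} ≤
        P {ω | 540 * Real.log n ≤ SX ω} + ∑ i, P {ω | B + 1 ≤ Y i ω} := by
      refine (measure_mono hincl).trans ((measure_union_le _ _).trans ?_)
      exact add_le_add le_rfl (measure_iUnion_fintype_le _ _)
    have hne : P {ω | 540 * Real.log n ≤ SX ω} + ∑ i, P {ω | B + 1 ≤ Y i ω} ≠ ⊤ := by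
      refine ENNReal.add_ne_top.mpr ⟨measure_ne_top _ _, ?_⟩
      exact (ENNReal.sum_lt_top.mpr fun i _ => measure_lt_top _ _).ne
    have h2 := ENNReal.toReal_mono hne h1
    rwa [ENNReal.toReal_add (measure_ne_top _ _)
        ((ENNReal.sum_lt_top.mpr fun i _ => measure_lt_top _ _).ne),
      ENNReal.toReal_sum (fun i _ => measure_ne_top _ _)] at h2
  -- facts about Δ and log
  have hΔpos : (0 : ℝ) < Δ := by exact_mod_cast hΔ
  have hlogΔ : Real.log Δ ≤ L := by
    rw [hL]
    exact Real.log_le_log hΔpos (by exact_mod_cast hΔn)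
  -- integrability
  have hintX : ∀ i, Integrable (fun ω => Real.exp ((1/2 : ℝ) * X i ω)) P := by
    intro i
    refine Integrable.mono' (integrable_const (Real.exp ((1/2 : ℝ) * B)))
      (((hXmeas i).const_mul _).exp).aestronglyMeasurable ?_
    filter_upwards with ω
    rw [Real.norm_eq_abs, abs_of_pos (Real.exp_pos _)]
    exact Real.exp_le_exp.mpr (by nlinarith [hXle i ω])
  have hSXmeas : Measurable SX := Finset.measurable_sum Finset.univ fun i _ => hXmeas i
  have hSXle : ∀ ω, SX ω ≤ (Δ : ℝ) * B := by
    intro ω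
    rw [hSX]
    calc ∑ i, X i ω ≤ ∑ _i : Fin Δ, (B : ℝ) := Finset.sum_le_sum fun i _ => hXle i ω
      _ = (Δ : ℝ) * B := by
          rw [Finset.sum_const, Finset.card_univ, Fintype.card_fin, nsmul_eq_mul]
  have hintS : Integrable (fun ω => Real.exp ((1/2 : ℝ) * SX ω)) P := by
    refine Integrable.mono' (integrable_const (Real.exp ((1/2 : ℝ) * ((Δ : ℝ) * B))))
      ((hSXmeas.const_mul _).exp).aestronglyMeasurable ?_
    filter_upwards with ω
    rw [Real.norm_eq_abs, abs_of_pos (Real.exp_pos _)]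
    exact Real.exp_le_exp.mpr (by nlinarith [hSXle ω])
  -- Chernoff bound
  have hcher := measure_ge_le_exp_mul_mgf (X := SX) (t := 1/2) (μ := P)
    (540 * Real.log n) (by norm_num) hintS
  -- mgf factorization and bound
  have hmgfsum : mgf SX P (1/2) = ∏ i, mgf (X i) P (1/2) := by
    have h := hXindep.mgf_sum hXmeas Finset.univ (t := 1/2)
    have hfun : SX = ∑ i, X i := by
      funext ω; rw [hSX]; simp [Finset.sum_apply]
    rw [hfun]; exact h
  have hmgfi : ∀ i, mgf (X i) P (1/2) ≤ Real.exp (15 * μf i) := by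
    intro i
    have h1 : mgf (X i) P (1/2) ≤ 1 + 15 * μf i := by
      have heq : (fun ω => Real.exp ((1/2 : ℝ) * X i ω))
          = fun ω => Real.exp (((min (Y i ω) B : ℕ) : ℝ) / 2) := by
        funext ω; rw [hX]; ring_nf
      calc mgf (X i) P (1/2) = ∫ ω, Real.exp ((1/2 : ℝ) * X i ω) ∂P := rfl
        _ = ∫ ω, Real.exp (((min (Y i ω) B : ℕ) : ℝ) / 2) ∂P := by rw [heq]
        _ ≤ 1 + 15 * μf i := by
            refine integral_exp_half_le P B (fun ω => min (Y i ω) B)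
              ((hmeas i).min measurable_const) (fun ω => min_le_right _ _)
              (by nlinarith [hμpos i]) ?_
            intro y hy
            have hsub : {ω | y ≤ min (Y i ω) B} ⊆ {ω | y ≤ Y i ω} := by
              intro ω hω
              simp only [Set.mem_setOf_eq] at *
              exact le_trans hω (min_le_left _ _)
            calc (P {ω | y ≤ min (Y i ω) B}).toReal
                ≤ (P {ω | y ≤ Y i ω}).toReal :=
                  ENNReal.toReal_mono (measure_ne_top _ _) (measure_mono hsub)
              _ ≤ 15 * Real.exp (-(y : ℝ)) * μf i := htail i y hy
              _ = 15 * μf i * Real.exp (-(y : ℝ)) := by ring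
    have h2 := Real.add_one_le_exp (15 * μf i)
    linarith
  have hprod : ∏ i, mgf (X i) P (1/2) ≤ Real.exp (45 * (1 + L)) := by
    calc ∏ i, mgf (X i) P (1/2) ≤ ∏ i, Real.exp (15 * μf i) :=
        Finset.prod_le_prod (fun i _ => mgf_nonneg) (fun i _ => hmgfi i)
      _ = Real.exp (∑ i, 15 * μf i) := (Real.exp_sum _ _).symm
      _ ≤ Real.exp (45 * (1 + L)) := by
          apply Real.exp_le_exp.mpr
          have hS := sum_mu_le Δ
          rw [← Finset.mul_sum]
          have : ∑ i, μf i ≤ 3 * (1 + Real.log Δ) := hS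
          nlinarith [hlogΔ]
  -- part 1
  have hpart1 : (P {ω | 540 * Real.log n ≤ SX ω}).toReal
      ≤ (1/2) * Real.exp (-30 * L) := by
    refine hcher.trans ?_
    have h12 : Real.exp (-Real.log 2) = 1/2 := by
      rw [Real.exp_neg, Real.exp_log (by norm_num : (0:ℝ) < 2)]; norm_num
    have hlog2 : Real.log 2 ≤ 1 := by
      linarith [Real.log_le_sub_one_of_pos (by norm_num : (0:ℝ) < 2)]
    calc Real.exp (-(1/2) * (540 * Real.log n)) * mgf SX P (1/2)
        ≤ Real.exp (-(1/2) * (540 * Real.log n)) * Real.exp (45 * (1 + L)) := by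
          apply mul_le_mul_of_nonneg_left _ (Real.exp_pos _).le
          rw [hmgfsum]; exact hprod
      _ = Real.exp (-(1/2) * (540 * L) + 45 * (1 + L)) := by
          rw [← Real.exp_add, hL]
      _ ≤ Real.exp (-Real.log 2 + -30 * L) := by
          apply Real.exp_le_exp.mpr
          linarith
      _ = (1/2) * Real.exp (-30 * L) := by rw [Real.exp_add, h12]
  -- part 2
  have hBcast : ((B : ℕ) : ℝ) = 40 * n := by rw [hB]; push_cast; ring
  have hpart2 : ∑ i, (P {ω | B + 1 ≤ Y i ω}).toReal ≤ (1/2) * Real.exp (-30 * L) := by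
    have hterm : ∀ i, (P {ω | B + 1 ≤ Y i ω}).toReal
        ≤ 15 * Real.exp (-(40 * (n:ℝ) + 1)) * μf i := by
      intro i
      have h := htail i (B + 1) (by omega)
      have hc : ((B + 1 : ℕ) : ℝ) = 40 * (n:ℝ) + 1 := by push_cast [hB]; ring
      rw [hc] at h
      exact h
    have hkey : 90 * (1 + L) ≤ Real.exp ((40 * (n:ℝ) + 1) - 30 * L) := by
      have h1 : 10 * (n:ℝ) + 31 ≤ (40 * (n:ℝ) + 1) - 30 * L := by linarith
      have h2 := Real.exp_le_exp.mpr h1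
      have h3 : Real.exp (10 * (n:ℝ) + 31) = Real.exp (10 * (n:ℝ)) * Real.exp 31 :=
        Real.exp_add _ _
      have h4 : 10 * (n:ℝ) + 1 ≤ Real.exp (10 * (n:ℝ)) := by
        linarith [Real.add_one_le_exp (10 * (n:ℝ))]
      have h5 : (272 : ℝ) ≤ Real.exp 31 := by
        have ha : (16.5 : ℝ) ≤ Real.exp 15.5 := by
          linarith [Real.add_one_le_exp (15.5 : ℝ)]
        have hb : Real.exp 31 = Real.exp 15.5 * Real.exp 15.5 := by
          rw [← Real.exp_add]; norm_num
        nlinarith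
      nlinarith [h2, h4, h5, Real.exp_pos (10 * (n:ℝ))]
    have hcollapse : Real.exp (-(40 * (n:ℝ) + 1))
        * Real.exp ((40 * (n:ℝ) + 1) - 30 * L) = Real.exp (-30 * L) := by
      rw [← Real.exp_add]; ring_nf
    calc ∑ i, (P {ω | B + 1 ≤ Y i ω}).toReal
        ≤ ∑ i, 15 * Real.exp (-(40 * (n:ℝ) + 1)) * μf i :=
          Finset.sum_le_sum fun i _ => hterm i
      _ = 15 * Real.exp (-(40 * (n:ℝ) + 1)) * ∑ i, μf i := by rw [Finset.mul_sum]
      _ ≤ 15 * Real.exp (-(40 * (n:ℝ) + 1)) * (3 * (1 + L)) := by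
          apply mul_le_mul_of_nonneg_left _ (by positivity)
          exact (sum_mu_le Δ).trans (by nlinarith [hlogΔ])
      _ = (1/2) * Real.exp (-(40 * (n:ℝ) + 1)) * (90 * (1 + L)) := by ring
      _ ≤ (1/2) * Real.exp (-(40 * (n:ℝ) + 1))
            * Real.exp ((40 * (n:ℝ) + 1) - 30 * L) := by
          apply mul_le_mul_of_nonneg_left hkey (by positivity)
      _ = (1/2) * Real.exp (-30 * L) := by rw [mul_assoc, hcollapse]
  rw [hrpow]
  linarith [hsplit, hpart1, hpart2]
end

section
/- There is an absolute constant C > 0 such that for every finite simple graph G = (V, E) on n ≥ 2 vertices with maximum degree Δ, there exists a partition of V into two sets L and R such that both the bipartite subgraph H consisting of all edges of G with one endpoint in L and one endpoint in R, and the complementary subgraph G \ H consisting of all remaining edges of G, have maximum degree at most Δ/2 + C · √Δ · log n. -/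
set_option maxHeartbeats 1000000

open Finset Real

/-- `e^x + e^{-x} ≤ 2 e^{x²}` for all real `x`. -/
lemma cosh_aux (x : ℝ) : Real.exp x + Real.exp (-x) ≤ 2 * Real.exp (x ^ 2) := by
  rcases le_or_gt |x| 1 with h | h
  · have h1 := Real.exp_bound h (by norm_num : 0 < 2)
    have h2 := Real.exp_bound (x := -x) (by rwa [abs_neg]) (by norm_num : 0 < 2)
    have e1 : ∑ m ∈ Finset.range 2, x ^ m / m.factorial = 1 + x := by
      simp [Finset.sum_range_succ]
    have e2 : ∑ m ∈ Finset.range 2, (-x) ^ m / m.factorial = 1 - x := by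
      simp [Finset.sum_range_succ]
      ring
    rw [e1] at h1
    rw [e2] at h2
    norm_num [Nat.factorial, sq_abs, abs_neg] at h1 h2
    have b1 : Real.exp x ≤ 1 + x + x ^ 2 * (3/4) := by
      have := (abs_sub_le_iff.1 h1).1
      linarith
    have b2 : Real.exp (-x) ≤ 1 - x + x ^ 2 * (3/4) := by
      have := (abs_sub_le_iff.1 h2).1
      linarith
    have b3 : 1 + x ^ 2 ≤ Real.exp (x ^ 2) := by
      have := Real.add_one_le_exp (x ^ 2)
      linarith
    nlinarith [sq_nonneg x]
  · have hx2 : |x| ≤ x ^ 2 := by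
      nlinarith [abs_nonneg x, sq_abs x]
    have b1 : Real.exp x ≤ Real.exp (x ^ 2) :=
      Real.exp_le_exp.2 ((le_abs_self x).trans hx2)
    have b2 : Real.exp (-x) ≤ Real.exp (x ^ 2) :=
      Real.exp_le_exp.2 ((neg_le_abs x).trans hx2)
    linarith

lemma sum_prod_bool {V : Type} [Fintype V] [DecidableEq V] (H : V → Bool → ℝ) :
    ∑ σ : V → Bool, ∏ w, H w (σ w) = ∏ w, (H w true + H w false) := by
  have h := Fintype.prod_sum (ι := V) (κ := fun _ => Bool) (f := H)
  rw [← h]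
  exact Finset.prod_congr rfl fun w _ => by simp

lemma exp_moment {V : Type} [Fintype V] [DecidableEq V] (s : Finset V) (μ : ℝ) :
    ∑ σ : V → Bool, Real.exp (∑ w ∈ s, (if σ w then μ else -μ))
      ≤ 2 ^ (Fintype.card V) * Real.exp (s.card * μ ^ 2) := by
  have key : ∀ σ : V → Bool, Real.exp (∑ w ∈ s, (if σ w then μ else -μ))
      = ∏ w : V, (if w ∈ s then Real.exp (if σ w then μ else -μ) else 1) := by
    intro σ
    rw [Real.exp_sum, ← Finset.prod_filter, Finset.filter_univ_mem]
  calc ∑ σ : V → Bool, Real.exp (∑ w ∈ s, (if σ w then μ else -μ))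
      = ∑ σ : V → Bool, ∏ w : V,
          (if w ∈ s then Real.exp (if σ w then μ else -μ) else 1) := by
        exact Finset.sum_congr rfl fun σ _ => key σ
    _ = ∏ w : V, ((if w ∈ s then Real.exp μ else 1) + (if w ∈ s then Real.exp (-μ) else 1)) := by
        rw [sum_prod_bool (fun w b => if w ∈ s then Real.exp (if b then μ else -μ) else 1)]
        apply Finset.prod_congr rfl
        intro w _
        by_cases hw : w ∈ s <;> simp [hw]
    _ ≤ ∏ w : V, (2 * Real.exp (μ ^ 2 * (if w ∈ s then 1 else 0))) := by
        apply Finset.prod_le_prod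
        · intro w _
          by_cases hw : w ∈ s <;> positivity
        · intro w _
          by_cases hw : w ∈ s
          · simpa [hw] using cosh_aux μ
          · simp [hw]
            norm_num
    _ = 2 ^ (Fintype.card V) * Real.exp (s.card * μ ^ 2) := by
        rw [Finset.prod_mul_distrib, Finset.prod_const, ← Real.exp_sum,
          ← Finset.mul_sum, Finset.sum_boole, Finset.filter_univ_mem]
        simp [Finset.card_univ, mul_comm]


/-- **Degree splitting by a vertex bipartition.** There is an absolute constant
`C > 0` such that every finite simple graph `G` on `n ≥ 2` vertices with
maximum degree `Δ` admits a partition of its vertex set into `L` and `R` such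
that both the bipartite subgraph of cross edges (one endpoint in `L`, one in
`R`) and the complementary subgraph (both endpoints in `L` or both in `R`) have
maximum degree at most `Δ/2 + C·√Δ·log n`. -/
theorem exists_degree_splitting_partition :
    ∃ C : ℝ, 0 < C ∧
      ∀ (V : Type) [Fintype V] [DecidableEq V]
        (G : SimpleGraph V) [DecidableRel G.Adj],
        2 ≤ Fintype.card V →
        ∃ L R : Finset V, Disjoint L R ∧ L ∪ R = Finset.univ ∧
          ∀ v : V,
            (((G.neighborFinset v).filter
                (fun w => (v ∈ L ∧ w ∈ R) ∨ (v ∈ R ∧ w ∈ L))).card : ℝ) ≤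
              (G.maxDegree : ℝ) / 2 +
                C * Real.sqrt G.maxDegree * Real.log (Fintype.card V) ∧
            (((G.neighborFinset v).filter
                (fun w => (v ∈ L ∧ w ∈ L) ∨ (v ∈ R ∧ w ∈ R))).card : ℝ) ≤
              (G.maxDegree : ℝ) / 2 +
                C * Real.sqrt G.maxDegree * Real.log (Fintype.card V) := by
  classical
  refine ⟨3, by norm_num, ?_⟩
  intro V _ _ G _ hn
  by_cases hΔ0 : G.maxDegree = 0
  · -- trivial case: empty graph
    refine ⟨Finset.univ, ∅, by simp, by simp, fun v => ?_⟩
    have hdeg : G.neighborFinset v = ∅ := by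
      rw [← Finset.card_eq_zero, G.card_neighborFinset_eq_degree]
      exact Nat.le_zero.mp (hΔ0 ▸ G.degree_le_maxDegree v)
    constructor
    · simp [hdeg, hΔ0]
    · simp [hdeg, hΔ0]
  · -- main case
    set n := Fintype.card V with hndef
    have hn0 : (0:ℝ) < n := by
      have : 0 < n := lt_of_lt_of_le (by norm_num) hn
      exact_mod_cast this
    have hn1 : (1:ℝ) < n := by
      have : 1 < n := lt_of_lt_of_le (by norm_num) hn
      exact_mod_cast this
    have hlogn : 0 < Real.log n := Real.log_pos hn1
    haveI hVne : Nonempty V := Fintype.card_pos_iff.mp (lt_of_lt_of_le (by norm_num) hn)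
    set Δ : ℝ := (G.maxDegree : ℝ) with hΔdef
    have hΔ1 : (1:ℝ) ≤ Δ := by
      have h : 1 ≤ G.maxDegree := Nat.one_le_iff_ne_zero.mpr hΔ0
      rw [hΔdef]
      exact_mod_cast h
    have hΔpos : 0 < Δ := lt_of_lt_of_le one_pos hΔ1
    have hsΔ : 0 < Real.sqrt Δ := Real.sqrt_pos.mpr hΔpos
    set t : ℝ := 3 * Real.sqrt Δ * Real.log n with htdef
    have ht : 0 < t := by positivity
    set lam : ℝ := t / Δ with hlamdef
    have hlam : 0 < lam := by positivity
    set Good : V → (V → Bool) → Prop := fun v σ =>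
      ((((G.neighborFinset v).filter (fun w => σ w = true)).card : ℝ)
          ≤ (G.degree v : ℝ) / 2 + t ∧
        (G.degree v : ℝ) - (((G.neighborFinset v).filter (fun w => σ w = true)).card : ℝ)
          ≤ (G.degree v : ℝ) / 2 + t) with hGooddef
    -- per-vertex bound on the number of bad colourings
    have hvert : ∀ v : V,
        ((Finset.univ.filter (fun σ : V → Bool => ¬ Good v σ)).card : ℝ) < 2 ^ n / n := by
      intro v
      set N := G.neighborFinset v with hNdef
      set d : ℝ := (G.degree v : ℝ) with hddef
      have hdN : (N.card : ℝ) = d := by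
        rw [hddef]
        exact_mod_cast G.card_neighborFinset_eq_degree v
      have hdΔ : d ≤ Δ := by
        rw [hddef, hΔdef]
        exact_mod_cast G.degree_le_maxDegree v
      set X : (V → Bool) → ℝ := fun σ =>
        lam * (2 * ((N.filter (fun w => σ w = true)).card : ℝ) - d) with hXdef
      have hXapp : ∀ σ : V → Bool,
          X σ = lam * (2 * ((N.filter (fun w => σ w = true)).card : ℝ) - d) :=
        fun σ => rfl
      have hY : ∀ (μ : ℝ) (σ : V → Bool),
          ∑ w ∈ N, (if σ w = true then μ else -μ)
            = μ * (2 * ((N.filter (fun w => σ w = true)).card : ℝ) - d) := by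
        intro μ σ
        rw [Finset.sum_ite, Finset.sum_const, Finset.sum_const, nsmul_eq_mul, nsmul_eq_mul]
        have h2 : ((N.filter (fun w => σ w = true)).card : ℝ)
            + ((N.filter (fun w => ¬ σ w = true)).card : ℝ) = d := by
          rw [← hdN]
          exact_mod_cast Finset.card_filter_add_card_filter_not
            (s := N) (p := fun w => σ w = true)
        linear_combination (-μ) * h2
      -- exponential moment bounds
      have hmomP : ∑ σ : V → Bool, Real.exp (X σ) ≤ 2 ^ n * Real.exp (Δ * lam ^ 2) := by
        have h1 : ∑ σ : V → Bool, Real.exp (X σ)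
            = ∑ σ : V → Bool, Real.exp (∑ w ∈ N, (if σ w = true then lam else -lam)) :=
          Finset.sum_congr rfl fun σ _ => by rw [hXapp σ, ← hY lam σ]
        rw [h1]
        refine le_trans (exp_moment N lam) ?_
        have : (N.card : ℝ) * lam ^ 2 ≤ Δ * lam ^ 2 := by
          rw [hdN]; exact mul_le_mul_of_nonneg_right hdΔ (sq_nonneg lam)
        exact mul_le_mul_of_nonneg_left (Real.exp_le_exp.2 this) (by positivity)
      have hmomN : ∑ σ : V → Bool, Real.exp (-(X σ)) ≤ 2 ^ n * Real.exp (Δ * lam ^ 2) := by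
        have h1 : ∑ σ : V → Bool, Real.exp (-(X σ))
            = ∑ σ : V → Bool, Real.exp (∑ w ∈ N, (if σ w = true then -lam else -(-lam))) := by
          refine Finset.sum_congr rfl fun σ _ => ?_
          rw [hXapp σ, hY (-lam) σ]
          congr 1
          ring
        rw [h1]
        refine le_trans (exp_moment N (-lam)) ?_
        have : (N.card : ℝ) * (-lam) ^ 2 ≤ Δ * lam ^ 2 := by
          rw [hdN, neg_sq]; exact mul_le_mul_of_nonneg_right hdΔ (sq_nonneg lam)
        exact mul_le_mul_of_nonneg_left (Real.exp_le_exp.2 this) (by positivity)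
      -- pointwise indicator bound on the bad set
      have hpoint : ∀ σ ∈ Finset.univ.filter (fun σ : V → Bool => ¬ Good v σ),
          (1:ℝ) ≤ Real.exp (X σ - 2 * lam * t) + Real.exp (-(X σ) - 2 * lam * t) := by
        intro σ hσ
        have hbad : ¬ Good v σ := (Finset.mem_filter.mp hσ).2
        rw [hGooddef] at hbad
        simp only [not_and_or, not_le] at hbad
        have hexp1 := Real.exp_pos (X σ - 2 * lam * t)
        have hexp2 := Real.exp_pos (-(X σ) - 2 * lam * t)
        rcases hbad with hbad | hbad
        · have h2t : 2 * t ≤ 2 * ((N.filter (fun w => σ w = true)).card : ℝ) - d := by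
            rw [← hNdef, ← hddef] at hbad
            linarith
          have : 2 * lam * t ≤ X σ := by
            rw [hXapp σ]
            nlinarith [mul_le_mul_of_nonneg_left h2t hlam.le]
          have h1 : (1:ℝ) ≤ Real.exp (X σ - 2 * lam * t) :=
            Real.one_le_exp (by linarith)
          linarith
        · have h2t : 2 * t ≤ d - 2 * ((N.filter (fun w => σ w = true)).card : ℝ) := by
            rw [← hNdef, ← hddef] at hbad
            linarith
          have : 2 * lam * t ≤ -(X σ) := by
            rw [hXapp σ]
            nlinarith [mul_le_mul_of_nonneg_left h2t hlam.le]
          have h1 : (1:ℝ) ≤ Real.exp (-(X σ) - 2 * lam * t) :=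
            Real.one_le_exp (by linarith)
          linarith
      -- summing up
      have hcount : ((Finset.univ.filter (fun σ : V → Bool => ¬ Good v σ)).card : ℝ)
          ≤ 2 * 2 ^ n * Real.exp (Δ * lam ^ 2 - 2 * lam * t) := by
        have hstep1 : ((Finset.univ.filter (fun σ : V → Bool => ¬ Good v σ)).card : ℝ)
            ≤ ∑ σ ∈ Finset.univ.filter (fun σ : V → Bool => ¬ Good v σ),
                (Real.exp (X σ - 2 * lam * t) + Real.exp (-(X σ) - 2 * lam * t)) := by
          rw [Finset.card_eq_sum_ones]
          push_cast
          exact Finset.sum_le_sum hpoint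
        have hstep2 : ∑ σ ∈ Finset.univ.filter (fun σ : V → Bool => ¬ Good v σ),
                (Real.exp (X σ - 2 * lam * t) + Real.exp (-(X σ) - 2 * lam * t))
            ≤ ∑ σ : V → Bool,
                (Real.exp (X σ - 2 * lam * t) + Real.exp (-(X σ) - 2 * lam * t)) := by
          refine Finset.sum_le_sum_of_subset_of_nonneg (Finset.filter_subset _ _) ?_
          intro σ _ _
          positivity
        have hstep3 : ∑ σ : V → Bool,
                (Real.exp (X σ - 2 * lam * t) + Real.exp (-(X σ) - 2 * lam * t))
            = (∑ σ : V → Bool, Real.exp (X σ)) * Real.exp (-(2 * lam * t))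
              + (∑ σ : V → Bool, Real.exp (-(X σ))) * Real.exp (-(2 * lam * t)) := by
          rw [Finset.sum_add_distrib, Finset.sum_mul, Finset.sum_mul]
          congr 1 <;> exact Finset.sum_congr rfl fun σ _ => by
            rw [sub_eq_add_neg, Real.exp_add]
        have hstep4 : (∑ σ : V → Bool, Real.exp (X σ)) * Real.exp (-(2 * lam * t))
              + (∑ σ : V → Bool, Real.exp (-(X σ))) * Real.exp (-(2 * lam * t))
            ≤ 2 * 2 ^ n * Real.exp (Δ * lam ^ 2 - 2 * lam * t) := by
          have hEpos : (0:ℝ) < Real.exp (-(2 * lam * t)) := Real.exp_pos _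
          have h1 : (∑ σ : V → Bool, Real.exp (X σ)) * Real.exp (-(2 * lam * t))
              ≤ 2 ^ n * Real.exp (Δ * lam ^ 2) * Real.exp (-(2 * lam * t)) :=
            mul_le_mul_of_nonneg_right hmomP hEpos.le
          have h2 : (∑ σ : V → Bool, Real.exp (-(X σ))) * Real.exp (-(2 * lam * t))
              ≤ 2 ^ n * Real.exp (Δ * lam ^ 2) * Real.exp (-(2 * lam * t)) :=
            mul_le_mul_of_nonneg_right hmomN hEpos.le
          have he : 2 ^ n * Real.exp (Δ * lam ^ 2) * Real.exp (-(2 * lam * t))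
              = (2:ℝ) ^ n * Real.exp (Δ * lam ^ 2 - 2 * lam * t) := by
            rw [mul_assoc, ← Real.exp_add, ← sub_eq_add_neg]
          rw [he] at h1 h2
          linarith
        linarith
      -- numerical estimate
      have hexpval : Δ * lam ^ 2 - 2 * lam * t = -(9 * Real.log n ^ 2) := by
        have hs : Real.sqrt Δ ^ 2 = Δ := Real.sq_sqrt hΔpos.le
        have ht2 : t ^ 2 = 9 * Δ * Real.log n ^ 2 := by
          rw [htdef, mul_pow, mul_pow, hs]
          ring
        have h1 : Δ * lam ^ 2 - 2 * lam * t = -(t ^ 2 / Δ) := by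
          rw [hlamdef]
          field_simp
          ring
        rw [h1, ht2]
        field_simp
      have hnum : 2 * (2:ℝ) ^ n * Real.exp (-(9 * Real.log n ^ 2)) < 2 ^ n / n := by
        have hL2 : Real.log 2 ≤ Real.log n := by
          apply Real.log_le_log (by norm_num)
          exact_mod_cast hn
        have hkey : Real.log 2 + Real.log n < 9 * Real.log n ^ 2 := by
          nlinarith [Real.log_two_gt_d9, hlogn]
        have h1 : Real.exp (-(9 * Real.log n ^ 2))
            < Real.exp (-(Real.log 2 + Real.log n)) := by
          apply Real.exp_lt_exp.2; linarith
        have h2 : Real.exp (-(Real.log 2 + Real.log n)) = 1 / (2 * n) := by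
          rw [Real.exp_neg, Real.exp_add, Real.exp_log (by norm_num : (0:ℝ) < 2),
            Real.exp_log hn0, one_div]
        rw [h2] at h1
        have hpow : (0:ℝ) < 2 ^ n := by positivity
        rw [lt_div_iff₀ hn0]
        have h3 : 2 * (2:ℝ) ^ n * Real.exp (-(9 * Real.log n ^ 2)) * n
            < 2 * 2 ^ n * (1 / (2 * n)) * n :=
          mul_lt_mul_of_pos_right
            (mul_lt_mul_of_pos_left h1 (by positivity : (0:ℝ) < 2 * 2 ^ n)) hn0
        calc 2 * (2:ℝ) ^ n * Real.exp (-(9 * Real.log n ^ 2)) * n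
            < 2 * 2 ^ n * (1 / (2 * n)) * n := h3
          _ = 2 ^ n := by
            field_simp
      rw [hexpval] at hcount
      exact lt_of_le_of_lt hcount hnum
    -- union bound: a good colouring exists
    have hexists : ∃ σ : V → Bool, ∀ v, Good v σ := by
      by_contra hcon
      push_neg at hcon
      have hsub : (Finset.univ : Finset (V → Bool))
          ⊆ Finset.univ.biUnion
              (fun v => Finset.univ.filter (fun σ : V → Bool => ¬ Good v σ)) := by
        intro σ _
        obtain ⟨v, hv⟩ := hcon σ
        exact Finset.mem_biUnion.2 ⟨v, Finset.mem_univ v,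
          Finset.mem_filter.2 ⟨Finset.mem_univ σ, hv⟩⟩
      have hcard1 : (Finset.univ : Finset (V → Bool)).card
          ≤ ∑ v : V, (Finset.univ.filter (fun σ : V → Bool => ¬ Good v σ)).card :=
        le_trans (Finset.card_le_card hsub) (Finset.card_biUnion_le)
      have hcardfun : ((Finset.univ : Finset (V → Bool)).card : ℝ) = 2 ^ n := by
        rw [Finset.card_univ, Fintype.card_fun]
        simp [hndef]
      have hcard2 : (2:ℝ) ^ n
          ≤ ∑ v : V, ((Finset.univ.filter (fun σ : V → Bool => ¬ Good v σ)).card : ℝ) := by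
        rw [← hcardfun]
        exact_mod_cast hcard1
      have hsum : ∑ v : V, ((Finset.univ.filter (fun σ : V → Bool => ¬ Good v σ)).card : ℝ)
          < ∑ _v : V, (2:ℝ) ^ n / n :=
        Finset.sum_lt_sum_of_nonempty Finset.univ_nonempty fun v _ => hvert v
      have hnne : (n:ℝ) ≠ 0 := ne_of_gt hn0
      have hconst : ∑ _v : V, (2:ℝ) ^ n / n = 2 ^ n := by
        rw [Finset.sum_const, Finset.card_univ, nsmul_eq_mul, ← hndef,
          mul_div_cancel₀ _ hnne]
      exact absurd (lt_of_le_of_lt hcard2 (hconst ▸ hsum)) (lt_irrefl _)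
    obtain ⟨σ, hσ⟩ := hexists
    -- build the partition
    refine ⟨Finset.univ.filter (fun v => σ v = true),
      Finset.univ.filter (fun v => σ v = false), ?_, ?_, ?_⟩
    · rw [Finset.disjoint_left]
      intro a ha hb
      simp only [Finset.mem_filter] at ha hb
      rw [ha.2] at hb
      exact absurd hb.2 (by simp)
    · ext a
      simp only [Finset.mem_union, Finset.mem_filter, Finset.mem_univ, true_and, iff_true]
      cases h : σ a <;> simp
    · intro v
      have hgood := hσ v
      have hdΔ : (G.degree v : ℝ) ≤ Δ := by
        rw [hΔdef]; exact_mod_cast G.degree_le_maxDegree v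
      have hcsum : (((G.neighborFinset v).filter (fun w => σ w = true)).card : ℝ)
          + (((G.neighborFinset v).filter (fun w => ¬ σ w = true)).card : ℝ)
          = (G.degree v : ℝ) := by
        rw [← G.card_neighborFinset_eq_degree v]
        exact_mod_cast Finset.card_filter_add_card_filter_not
          (s := G.neighborFinset v) (p := fun w => σ w = true)
      have hmem1 : ∀ x : V, x ∈ Finset.univ.filter (fun v => σ v = true) ↔ σ x = true := by
        intro x; simp
      have hmem2 : ∀ x : V, x ∈ Finset.univ.filter (fun v => σ v = false) ↔ σ x = false := by
        intro x; simp
      have hsetcross : (G.neighborFinset v).filter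
            (fun w => (v ∈ Finset.univ.filter (fun v => σ v = true)
                ∧ w ∈ Finset.univ.filter (fun v => σ v = false))
              ∨ (v ∈ Finset.univ.filter (fun v => σ v = false)
                ∧ w ∈ Finset.univ.filter (fun v => σ v = true)))
          = (G.neighborFinset v).filter (fun w => (σ w = true) ≠ (σ v = true)) := by
        apply Finset.filter_congr
        intro w _
        simp only [hmem1, hmem2, eq_iff_iff]
        cases hv' : σ v <;> cases hw' : σ w <;> simp
      have hsetsame : (G.neighborFinset v).filter
            (fun w => (v ∈ Finset.univ.filter (fun v => σ v = true)
                ∧ w ∈ Finset.univ.filter (fun v => σ v = true))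
              ∨ (v ∈ Finset.univ.filter (fun v => σ v = false)
                ∧ w ∈ Finset.univ.filter (fun v => σ v = false)))
          = (G.neighborFinset v).filter (fun w => (σ w = true) = (σ v = true)) := by
        apply Finset.filter_congr
        intro w _
        simp only [hmem1, hmem2, eq_iff_iff]
        cases hv' : σ v <;> cases hw' : σ w <;> simp
      rw [hsetcross, hsetsame]
      have hbound : (G.degree v : ℝ) / 2 + t ≤ Δ / 2 + 3 * Real.sqrt Δ * Real.log n := by
        rw [← htdef]; linarith
      by_cases hv' : σ v = true
      · have e1 : (G.neighborFinset v).filter (fun w => (σ w = true) ≠ (σ v = true))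
            = (G.neighborFinset v).filter (fun w => ¬ σ w = true) := by
          apply Finset.filter_congr
          intro w _
          simp [hv', eq_iff_iff]
        have e2 : (G.neighborFinset v).filter (fun w => (σ w = true) = (σ v = true))
            = (G.neighborFinset v).filter (fun w => σ w = true) := by
          apply Finset.filter_congr
          intro w _
          simp [hv', eq_iff_iff]
        rw [e1, e2]
        constructor
        · have : (((G.neighborFinset v).filter (fun w => ¬ σ w = true)).card : ℝ)
              ≤ (G.degree v : ℝ) / 2 + t := by linarith [hgood.2]
          linarith
        · linarith [hgood.1]
      · have e1 : (G.neighborFinset v).filter (fun w => (σ w = true) ≠ (σ v = true))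
            = (G.neighborFinset v).filter (fun w => σ w = true) := by
          apply Finset.filter_congr
          intro w _
          simp [hv', eq_iff_iff]
        have e2 : (G.neighborFinset v).filter (fun w => (σ w = true) = (σ v = true))
            = (G.neighborFinset v).filter (fun w => ¬ σ w = true) := by
          apply Finset.filter_congr
          intro w _
          simp [hv', eq_iff_iff]
        rw [e1, e2]
        constructor
        · linarith [hgood.1]
        · have : (((G.neighborFinset v).filter (fun w => ¬ σ w = true)).card : ℝ)
              ≤ (G.degree v : ℝ) / 2 + t := by linarith [hgood.2]
          linarith
end
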